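/- arXiv:1810.09175 — 7 statements merged into one kernel-verified Lean document; each statement's English description precedes it below -/
import Mathlib

section
/- Let p > 2 be a prime number. Then there are infinitely many clones on Z_p × Z_p which contain the componentwise addition ⊕ and which are not finitely generated, i.e., infinitely many pairwise distinct clones C containing ⊕ such that C is not the smallest clone containing any finite set of operations. -/
/-- A finitary operation on `A`: an element of arity `n + 1` (so every arity is `≥ 1`). -/
abbrev Ops (A : Type) := Σ n : ℕ, ((Fin (n + 1) → A) → A)

/-- The product `E·F` of two sets of finitary operations:
all compositions `f ∘ (g₁, …, gₙ)` with `f ∈ E` and all `gᵢ ∈ F` of a common arity. -/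
def OpProd {A : Type} (E F : Set (Ops A)) : Set (Ops A) :=
  { h | ∃ (n m : ℕ) (f : (Fin (n + 1) → A) → A) (g : Fin (n + 1) → (Fin (m + 1) → A) → A),
      (⟨n, f⟩ : Ops A) ∈ E ∧ (∀ i, (⟨m, g i⟩ : Ops A) ∈ F) ∧
      h = ⟨m, fun x => f (fun i => g i x)⟩ }

/-- The set `Lin(Z_p)` of linear operations `(x₁, …, xₙ) ↦ Σ aᵢ xᵢ` on `ZMod p`. -/
def LinOps (p : ℕ) : Set (Ops (ZMod p)) :=
  { h | ∃ (n : ℕ) (a : Fin (n + 1) → ZMod p), h = ⟨n, fun x => ∑ i, a i * x i⟩ }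

/-- A linearly closed clonoid on `ZMod p`. -/
def IsLCC (p : ℕ) (C : Set (Ops (ZMod p))) : Prop :=
  C.Nonempty ∧ OpProd (LinOps p) C ⊆ C ∧ OpProd C (LinOps p) ⊆ C

/-- The sum `D₁ + D₂` of two sets of operations on `ZMod p`. -/
def LCCsum (p : ℕ) (D₁ D₂ : Set (Ops (ZMod p))) : Set (Ops (ZMod p)) :=
  { h | ∃ (n : ℕ) (f g : (Fin (n + 1) → ZMod p) → ZMod p),
      (⟨n, f⟩ : Ops (ZMod p)) ∈ D₁ ∧ (⟨n, g⟩ : Ops (ZMod p)) ∈ D₂ ∧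
      h = ⟨n, fun x => f x + g x⟩ }

/-- The linearly closed clonoid on `ZMod p` generated by a set `F` of operations. -/
def genLC (p : ℕ) (F : Set (Ops (ZMod p))) : Set (Ops (ZMod p)) :=
  ⋂₀ { C | IsLCC p C ∧ F ⊆ C }

/-- A finitely generated linearly closed clonoid on `ZMod p`. -/
def FinGenLCC (p : ℕ) (C : Set (Ops (ZMod p))) : Prop :=
  ∃ F : Set (Ops (ZMod p)), F.Finite ∧ C = genLC p F

/-- A `p`-minor subset of `ℕ`. -/
def IsPMinor (p : ℕ) (M : Set ℕ) : Prop :=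
  ∀ n ∈ M, n > p - 1 → n - (p - 1) ∈ M

/-- A reduced polynomial: every variable exponent is at most `p - 1`. -/
def IsReducedPoly (p : ℕ) (f : MvPolynomial ℕ (ZMod p)) : Prop :=
  ∀ d ∈ f.support, ∀ i, d i ≤ p - 1

/-- The `(n+1)`-ary operation on `ZMod p` induced by a polynomial
(meaningful when all variables of `f` have index `< n + 1`). -/
noncomputable def inducedOp (p n : ℕ) (f : MvPolynomial ℕ (ZMod p)) : (Fin (n + 1) → ZMod p) → ZMod p :=
  fun x => MvPolynomial.eval (fun i => if h : i < n + 1 then x ⟨i, h⟩ else 0) f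

/-- `𝒞(M)`: all constant-zero operations together with all operations induced by a nonzero
reduced polynomial each of whose monomials has total degree in `M`. -/
def CM (p : ℕ) (M : Set ℕ) : Set (Ops (ZMod p)) :=
  { h | ∃ n : ℕ, h = ⟨n, fun _ => 0⟩ } ∪
  { h | ∃ (n : ℕ) (f : MvPolynomial ℕ (ZMod p)), f ≠ 0 ∧ IsReducedPoly p f ∧
      (∀ i ∈ f.vars, i < n + 1) ∧ (∀ d ∈ f.support, (d.sum fun _ e => e) ∈ M) ∧
      h = ⟨n, inducedOp p n f⟩ }

/-- `𝒫(M)`: polynomials each of whose monomials has total degree in `M` (this includes `0`). -/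
def PM (p : ℕ) (M : Set ℕ) : Set (MvPolynomial ℕ (ZMod p)) :=
  { f | ∀ d ∈ f.support, (d.sum fun _ e => e) ∈ M }

/-- The set `L` of linear polynomials `Σ aᵢ xᵢ`. -/
def LinPoly (p : ℕ) : Set (MvPolynomial ℕ (ZMod p)) :=
  { f | ∃ (s : Finset ℕ) (a : ℕ → ZMod p),
      f = ∑ i ∈ s, MvPolynomial.C (a i) * MvPolynomial.X i }

/-- The product `A·B` of two sets of polynomials: substitute members of `B` for the
variables of a member of `A` (regarded as `n`-ary). -/
def PolyProd (p : ℕ) (A B : Set (MvPolynomial ℕ (ZMod p))) :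
    Set (MvPolynomial ℕ (ZMod p)) :=
  { h | ∃ (n : ℕ) (f : MvPolynomial ℕ (ZMod p)) (g : ℕ → MvPolynomial ℕ (ZMod p)),
      f ∈ A ∧ (∀ i ∈ f.vars, i < n) ∧ (∀ i < n, g i ∈ B) ∧ h = MvPolynomial.aeval g f }

/-- A polynomial linearly closed clonoid. -/
def IsPLC (p : ℕ) (C : Set (MvPolynomial ℕ (ZMod p))) : Prop :=
  C.Nonempty ∧ PolyProd p (LinPoly p) C ⊆ C ∧ PolyProd p C (LinPoly p) ⊆ C

/-- The polynomial linearly closed clonoid generated by `F`. -/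
def genPLC (p : ℕ) (F : Set (MvPolynomial ℕ (ZMod p))) : Set (MvPolynomial ℕ (ZMod p)) :=
  ⋂₀ { C | IsPLC p C ∧ F ⊆ C }

/-- A clone on `A`: contains all projections and is closed under composition. -/
def IsClone {A : Type} (C : Set (Ops A)) : Prop :=
  (∀ (n : ℕ) (j : Fin (n + 1)), (⟨n, fun x => x j⟩ : Ops A) ∈ C) ∧ OpProd C C ⊆ C

/-- The clone generated by a set of operations. -/
def cloneGen {A : Type} (F : Set (Ops A)) : Set (Ops A) :=
  ⋂₀ { C | IsClone C ∧ F ⊆ C }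

/-- A finitely generated clone. -/
def FinGenClone {A : Type} (C : Set (Ops A)) : Prop :=
  ∃ F : Set (Ops A), F.Finite ∧ C = cloneGen F

/-- The binary addition operation, as a finitary operation. -/
def plusOp (A : Type) [Add A] : Ops A := ⟨1, fun x => x 0 + x 1⟩

/-- The set of all projections. -/
def ProjOps (A : Type) : Set (Ops A) :=
  { h | ∃ (n : ℕ) (j : Fin (n + 1)), h = ⟨n, fun x => x j⟩ }

/-- A linearly closed iterative algebra on `ZMod p`. -/
def IsLCIA (p : ℕ) (C : Set (Ops (ZMod p))) : Prop :=
  IsLCC p C ∧ OpProd C (C ∪ ProjOps (ZMod p)) ⊆ C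

/-- The clone `Aff(Z_p)` of affine operations `(x₁, …, xₙ) ↦ c + Σ aᵢ xᵢ`. -/
def AffOps (p : ℕ) : Set (Ops (ZMod p)) :=
  { h | ∃ (n : ℕ) (c : ZMod p) (a : Fin (n + 1) → ZMod p),
      h = ⟨n, fun x => c + ∑ i, a i * x i⟩ }

/-- An operation preserves an automorphism `π` of `(ZMod p, +)`. -/
def PreservesAut {p : ℕ} (h : Ops (ZMod p)) (π : AddAut (ZMod p)) : Prop :=
  ∀ x : Fin (h.1 + 1) → ZMod p, h.2 (fun i => π (x i)) = π (h.2 x)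

/-- An operation preserves the unary relation `{0}`. -/
def Preserves0 {p : ℕ} (h : Ops (ZMod p)) : Prop :=
  h.2 (fun _ => 0) = 0

/-- The embedding `φ` of linearly closed clonoids on `ZMod p` into sets of operations
on `ZMod p × ZMod p`. -/
def phiMap (p : ℕ) (C : Set (Ops (ZMod p))) : Set (Ops (ZMod p × ZMod p)) :=
  { h | ∃ (n : ℕ) (l₁ l₂ f : (Fin (n + 1) → ZMod p) → ZMod p),
      (⟨n, l₁⟩ : Ops (ZMod p)) ∈ LinOps p ∧ (⟨n, l₂⟩ : Ops (ZMod p)) ∈ LinOps p ∧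
      (⟨n, f⟩ : Ops (ZMod p)) ∈ C ∧
      h = ⟨n, fun x => (l₁ (fun i => (x i).1) + f (fun i => (x i).2),
                        l₂ (fun i => (x i).2))⟩ }

namespace S2

open MvPolynomial

/-- exponent reduction -/
def red (p e : ℕ) : ℕ := if e = 0 then 0 else (e - 1) % (p - 1) + 1

lemma red_zero (p : ℕ) : red p 0 = 0 := rfl

lemma red_eq_zero_iff {p e : ℕ} : red p e = 0 ↔ e = 0 := by
  unfold red; split <;> simp_all

lemma red_le {p : ℕ} (hp2 : 2 < p) (e : ℕ) : red p e ≤ p - 1 := by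
  unfold red; split
  · omega
  · have : (e - 1) % (p - 1) < p - 1 := Nat.mod_lt _ (by omega)
    omega

lemma red_spec (p e : ℕ) : e = red p e + (p - 1) * ((e - 1) / (p - 1)) := by
  unfold red; split
  · simp_all
  · have h1 := Nat.mod_add_div (e - 1) (p - 1)
    omega

lemma red_of_le {p e : ℕ} (h1 : 1 ≤ e) (h2 : e ≤ p - 1) : red p e = e := by
  unfold red
  rw [if_neg (by omega), Nat.mod_eq_of_lt (by omega)]
  omega

lemma red_sub {p e : ℕ} (hp2 : 2 < p) (h : p ≤ e) : red p (e - (p - 1)) = red p e := by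
  unfold red
  rw [if_neg (by omega), if_neg (by omega)]
  have h2 : e - (p - 1) - 1 + (p - 1) = e - 1 := by omega
  have := Nat.add_mod_right (e - (p - 1) - 1) (p - 1)
  rw [h2] at this
  rw [← this]

lemma pow_red {p : ℕ} [Fact p.Prime] (x : ZMod p) (e : ℕ) : x ^ red p e = x ^ e := by
  have hp2 : 2 ≤ p := (Fact.out : p.Prime).two_le
  induction e using Nat.strong_induction_on with
  | _ e ih =>
    rcases Nat.eq_zero_or_pos e with rfl | he
    · rfl
    rcases le_or_gt p e with hpe | hpe
    · -- x ^ e = x ^ (e - (p-1))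
      have hx : x ^ e = x ^ (e - (p - 1)) := by
        conv_lhs => rw [show e = (e - p) + p by omega]
        rw [pow_add, ZMod.pow_card,
          show e - (p - 1) = (e - p) + 1 by omega, pow_succ]
      rcases Nat.lt_or_ge 2 p with hp3 | hp3
      · rw [hx, ← ih (e - (p - 1)) (by omega), red_sub hp3 hpe]
      · -- p = 2
        have hp : p = 2 := by omega
        subst hp
        -- red 2 e = if e = 0 then 0 else (e-1) % 1 + 1 = 1
        have : red 2 e = 1 := by unfold red; rw [if_neg (by omega)]; simp [Nat.mod_one]
        rw [this, hx]
        have : e - 1 = e - (2 - 1) := rfl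
        rw [← ih (e - (2-1)) (by omega) ]
        rcases Nat.eq_or_lt_of_le (show 2 ≤ e by omega) with h2 | h2
        · rw [← h2]; rfl
        · have : red 2 (e - (2-1)) = 1 := by unfold red; rw [if_neg (by omega)]; simp [Nat.mod_one]
          rw [this]
    · rw [red_of_le he (by omega)]

lemma pminor_iterate {p : ℕ} {M : Set ℕ} (hM : IsPMinor p M) (t k : ℕ) (ht : 1 ≤ t)
    (hp : 1 ≤ p - 1) : t + (p - 1) * k ∈ M → t ∈ M := by
  induction k with
  | zero => simpa
  | succ k ih =>
    intro h
    have h1 : t + (p - 1) * (k + 1) > p - 1 := by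
      have := Nat.mul_le_mul_left (p-1) (show 1 ≤ k + 1 by omega)
      omega
    have h2 := hM _ h h1
    have h3 : t + (p - 1) * (k + 1) - (p - 1) = t + (p - 1) * k := by
      rw [Nat.mul_succ]; omega
    rw [h3] at h2
    exact ih h2


open MvPolynomial

lemma sumExp_eq_degree (d : ℕ →₀ ℕ) : (d.sum fun _ e => e) = Finsupp.degree d := rfl

/-- reduce an exponent vector -/
noncomputable def dred (p : ℕ) (d : ℕ →₀ ℕ) : ℕ →₀ ℕ :=
  Finsupp.mapRange (red p) (red_zero p) d

lemma dred_apply (p : ℕ) (d : ℕ →₀ ℕ) (i : ℕ) : dred p d i = red p (d i) :=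
  Finsupp.mapRange_apply

lemma support_dred (p : ℕ) (d : ℕ →₀ ℕ) : (dred p d).support = d.support := by
  ext i
  simp only [Finsupp.mem_support_iff, dred_apply, ne_eq]
  rw [not_iff_not]
  exact red_eq_zero_iff

lemma degree_dred_spec (p : ℕ) (d : ℕ →₀ ℕ) :
    Finsupp.degree d = Finsupp.degree (dred p d) +
      (p - 1) * ∑ i ∈ d.support, ((d i - 1) / (p - 1)) := by
  simp only [Finsupp.degree_apply]
  rw [support_dred, Finset.mul_sum, ← Finset.sum_add_distrib]
  apply Finset.sum_congr rfl
  intro i _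
  rw [dred_apply]
  exact red_spec p (d i)

lemma degree_dred_mem {p : ℕ} (hp2 : 2 < p) {M : Set ℕ} (hM : IsPMinor p M)
    {d : ℕ →₀ ℕ} (hd : Finsupp.degree d ∈ M) : Finsupp.degree (dred p d) ∈ M := by
  rcases Nat.eq_zero_or_pos (Finsupp.degree (dred p d)) with h0 | h1
  · rw [Finsupp.degree_eq_zero_iff] at h0
    have hd0 : d = 0 := by
      ext i
      have := dred_apply p d i
      rw [h0] at this
      simp only [Finsupp.coe_zero, Pi.zero_apply] at this ⊢
      exact red_eq_zero_iff.mp this.symm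
    have hz : dred p 0 = 0 := Finsupp.mapRange_zero
    rw [hd0] at hd ⊢
    rwa [hz]
  · exact pminor_iterate hM _ _ h1 (by omega) (by rw [← degree_dred_spec]; exact hd)

/-- full reduction of a polynomial -/
noncomputable def reducePoly (p : ℕ) (q : MvPolynomial ℕ (ZMod p)) : MvPolynomial ℕ (ZMod p) :=
  ∑ d ∈ q.support, monomial (dred p d) (coeff d q)

lemma support_reducePoly (p : ℕ) (q : MvPolynomial ℕ (ZMod p)) :
    (reducePoly p q).support ⊆ q.support.image (dred p) := by
  classical
  refine (support_sum).trans ?_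
  intro d hd
  rw [Finset.mem_biUnion] at hd
  obtain ⟨d', hd', hmem⟩ := hd
  have := support_monomial_subset hmem
  rw [Finset.mem_singleton] at this
  subst this
  exact Finset.mem_image_of_mem _ hd'

lemma reducePoly_reduced {p : ℕ} (hp2 : 2 < p) (q : MvPolynomial ℕ (ZMod p)) :
    IsReducedPoly p (reducePoly p q) := by
  intro d hd i
  obtain ⟨d', _, rfl⟩ := Finset.mem_image.mp (support_reducePoly p q hd)
  rw [dred_apply]
  exact red_le hp2 _

lemma reducePoly_degOK {p : ℕ} (hp2 : 2 < p) {M : Set ℕ} (hM : IsPMinor p M)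
    {q : MvPolynomial ℕ (ZMod p)} (hq : ∀ d ∈ q.support, Finsupp.degree d ∈ M) :
    ∀ d ∈ (reducePoly p q).support, Finsupp.degree d ∈ M := by
  intro d hd
  obtain ⟨d', hd', rfl⟩ := Finset.mem_image.mp (support_reducePoly p q hd)
  exact degree_dred_mem hp2 hM (hq d' hd')

lemma eval_reducePoly {p : ℕ} [Fact p.Prime] (q : MvPolynomial ℕ (ZMod p))
    (v : ℕ → ZMod p) : eval v (reducePoly p q) = eval v q := by
  conv_rhs => rw [← support_sum_monomial_coeff q]
  rw [reducePoly, map_sum, map_sum]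
  apply Finset.sum_congr rfl
  intro d _
  rw [eval_monomial, eval_monomial]
  congr 1
  unfold dred
  rw [Finsupp.prod_mapRange_index (by intro a; exact pow_zero _)]
  apply Finsupp.prod_congr
  intro i _
  exact pow_red (v i) (d i)


lemma inducedOp_eval {p n : ℕ} (q : MvPolynomial ℕ (ZMod p)) (v : Fin (n+1) → ZMod p) :
    inducedOp p n q v = eval (fun i => if h : i < n + 1 then v ⟨i, h⟩ else 0) q := rfl

/-- A reduced polynomial with variables below `n+1` inducing the zero operation is zero. -/
lemma reduced_eq_zero {p n : ℕ} [Fact p.Prime] {q : MvPolynomial ℕ (ZMod p)}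
    (hred : IsReducedPoly p q) (hvars : ∀ d ∈ q.support, ∀ i, d i ≠ 0 → i < n + 1)
    (h0 : ∀ v : Fin (n+1) → ZMod p, inducedOp p n q v = 0) : q = 0 := by
  have hinj : Function.Injective (Fin.val : Fin (n+1) → ℕ) := Fin.val_injective
  obtain ⟨q₀, rfl⟩ := exists_rename_eq_of_vars_subset_range q Fin.val hinj (by
    intro i hi
    rw [Finset.mem_coe, mem_vars] at hi
    obtain ⟨d, hd, hid⟩ := hi
    have := hvars d hd i (Finsupp.mem_support_iff.mp hid)
    exact ⟨⟨i, this⟩, rfl⟩)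
  suffices hq : q₀ = 0 by rw [hq, map_zero]
  classical
  have hsupp : (rename (Fin.val) q₀).support =
      Finset.image (Finsupp.mapDomain (Fin.val)) q₀.support :=
    support_rename_of_injective hinj
  have hcard : Fintype.card (ZMod p) = p := ZMod.card p
  refine eq_zero_of_eval_eq_zero (σ := Fin (n+1)) (K := ZMod p) q₀ ?_ ?_
  · intro w
    have h := h0 w
    rw [inducedOp_eval, eval_rename] at h
    have hcomp : ((fun i => if h : i < n + 1 then w ⟨i, h⟩ else 0) ∘ Fin.val) = w := by
      funext j
      simp only [Function.comp_apply]
      rw [dif_pos j.isLt]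
    rwa [hcomp] at h
  · rw [mem_restrictDegree]
    intro s hs i
    have hmem : Finsupp.mapDomain (Fin.val) s ∈ (rename (Fin.val) q₀).support := by
      rw [hsupp]; exact Finset.mem_image_of_mem _ hs
    have := hred _ hmem i.val
    rw [hcard]
    rwa [Finsupp.mapDomain_apply hinj] at this

lemma reduced_inj {p n : ℕ} [Fact p.Prime] {q₁ q₂ : MvPolynomial ℕ (ZMod p)}
    (hr₁ : IsReducedPoly p q₁) (hr₂ : IsReducedPoly p q₂)
    (hv₁ : ∀ d ∈ q₁.support, ∀ i, d i ≠ 0 → i < n + 1)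
    (hv₂ : ∀ d ∈ q₂.support, ∀ i, d i ≠ 0 → i < n + 1)
    (h : ∀ v : Fin (n+1) → ZMod p, inducedOp p n q₁ v = inducedOp p n q₂ v) : q₁ = q₂ := by
  classical
  have hsub : (q₁ - q₂).support ⊆ q₁.support ∪ q₂.support := support_sub _ _ _
  have : q₁ - q₂ = 0 := by
    apply reduced_eq_zero (n := n)
    · intro d hd i
      rcases Finset.mem_union.mp (hsub hd) with h' | h'
      · exact hr₁ d h' i
      · exact hr₂ d h' i
    · intro d hd i hi
      rcases Finset.mem_union.mp (hsub hd) with h' | h'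
      · exact hv₁ d h' i hi
      · exact hv₂ d h' i hi
    · intro v
      rw [inducedOp_eval, map_sub, ← inducedOp_eval, ← inducedOp_eval, h v, sub_self]
  exact sub_eq_zero.mp this

open Classical in
noncomputable def zmap (p n : ℕ) (q : MvPolynomial ℕ (ZMod p)) : MvPolynomial ℕ (ZMod p) :=
  ∑ d ∈ q.support, if (∀ i, d i ≠ 0 → i < n + 1) then monomial d (coeff d q) else 0

open Classical in
lemma support_zmap (p n : ℕ) (q : MvPolynomial ℕ (ZMod p)) :
    (zmap p n q).support ⊆ q.support.filter (fun d => ∀ i, d i ≠ 0 → i < n + 1) := by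
  refine (support_sum).trans ?_
  intro d hd
  rw [Finset.mem_biUnion] at hd
  obtain ⟨d', hd', hmem⟩ := hd
  split at hmem
  · have := support_monomial_subset hmem
    rw [Finset.mem_singleton] at this
    subst this
    exact Finset.mem_filter.mpr ⟨hd', by assumption⟩
  · simp at hmem

lemma inducedOp_zmap (p n : ℕ) (q : MvPolynomial ℕ (ZMod p)) (v : Fin (n+1) → ZMod p) :
    inducedOp p n (zmap p n q) v = inducedOp p n q v := by
  classical
  rw [inducedOp_eval, inducedOp_eval]
  conv_rhs => rw [← support_sum_monomial_coeff q]
  rw [zmap, map_sum, map_sum]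
  apply Finset.sum_congr rfl
  intro d _
  split
  · rfl
  · rename_i hbad
    push_neg at hbad
    obtain ⟨i, hi0, hin⟩ := hbad
    rw [map_zero, eval_monomial]
    have hz : (d.prod fun j e => (fun k => if h : k < n + 1 then v ⟨k, h⟩ else 0) j ^ e) = 0 := by
      rw [Finsupp.prod]
      apply Finset.prod_eq_zero (Finsupp.mem_support_iff.mpr hi0)
      show (if h : i < n + 1 then v ⟨i, h⟩ else 0) ^ d i = 0
      rw [dif_neg (by omega)]
      exact zero_pow hi0
    rw [hz, mul_zero]


def OpProd {A : Type} (E F : Set (Ops A)) : Set (Ops A) :=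
  { h | ∃ (n m : ℕ) (f : (Fin (n + 1) → A) → A) (g : Fin (n + 1) → (Fin (m + 1) → A) → A),
      (⟨n, f⟩ : Ops A) ∈ E ∧ (∀ i, (⟨m, g i⟩ : Ops A) ∈ F) ∧
      h = ⟨m, fun x => f (fun i => g i x)⟩ }

def IsClone {A : Type} (C : Set (Ops A)) : Prop :=
  (∀ (n : ℕ) (j : Fin (n + 1)), (⟨n, fun x => x j⟩ : Ops A) ∈ C) ∧ OpProd C C ⊆ C

def plusOp (A : Type) [Add A] : Ops A := ⟨1, fun x => x 0 + x 1⟩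

open MvPolynomial

noncomputable def opD (p n : ℕ) (a b : Fin (n+1) → ZMod p) (q : MvPolynomial ℕ (ZMod p)) :
    Ops (ZMod p × ZMod p) :=
  ⟨n, fun x => ((∑ i, a i * (x i).1) + inducedOp p n q (fun i => (x i).2),
                ∑ i, b i * (x i).2)⟩

def DM (p : ℕ) (M : Set ℕ) : Set (Ops (ZMod p × ZMod p)) :=
  { h | ∃ (n : ℕ) (a b : Fin (n + 1) → ZMod p) (q : MvPolynomial ℕ (ZMod p)),
      IsReducedPoly p q ∧ (∀ d ∈ q.support, Finsupp.degree d ∈ M) ∧ h = opD p n a b q }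

lemma DM_elim {p n : ℕ} {M : Set ℕ}
    {f : (Fin (n+1) → ZMod p × ZMod p) → ZMod p × ZMod p}
    (h : (⟨n, f⟩ : Ops (ZMod p × ZMod p)) ∈ DM p M) :
    ∃ (a b : Fin (n+1) → ZMod p) (q : MvPolynomial ℕ (ZMod p)),
      IsReducedPoly p q ∧ (∀ d ∈ q.support, Finsupp.degree d ∈ M) ∧
      ∀ x, f x = ((∑ i, a i * (x i).1) + inducedOp p n q (fun i => (x i).2),
                  ∑ i, b i * (x i).2) := by
  obtain ⟨n', a, b, q, h1, h2, heq⟩ := h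
  rw [opD] at heq
  obtain ⟨hn, hf⟩ := Sigma.mk.inj_iff.mp heq
  subst hn
  exact ⟨a, b, q, h1, h2, fun x => congrFun (eq_of_heq hf) x⟩

lemma reduced_zero (p : ℕ) : IsReducedPoly p (0 : MvPolynomial ℕ (ZMod p)) := by
  intro d hd
  simp [support_zero] at hd

lemma inducedOp_zero (p n : ℕ) (v : Fin (n+1) → ZMod p) :
    inducedOp p n (0 : MvPolynomial ℕ (ZMod p)) v = 0 := by
  rw [inducedOp_eval, map_zero]

lemma sum_delta {p n : ℕ} (j : Fin (n+1)) (u : Fin (n+1) → ZMod p) :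
    (∑ i, (if i = j then (1 : ZMod p) else 0) * u i) = u j := by
  rw [Finset.sum_eq_single j]
  · rw [if_pos rfl, one_mul]
  · intro i _ hij
    rw [if_neg hij, zero_mul]
  · intro hj
    exact absurd (Finset.mem_univ j) hj

lemma proj_mem_DM {p : ℕ} {M : Set ℕ} (n : ℕ) (j : Fin (n+1)) :
    (⟨n, fun x => x j⟩ : Ops (ZMod p × ZMod p)) ∈ DM p M := by
  refine ⟨n, fun i => if i = j then 1 else 0, fun i => if i = j then 1 else 0, 0,
    reduced_zero p, by simp [support_zero], ?_⟩
  rw [opD]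
  congr 1
  funext x
  rw [inducedOp_zero, add_zero, sum_delta, sum_delta]

lemma plus_mem_DM {p : ℕ} {M : Set ℕ} :
    plusOp (ZMod p × ZMod p) ∈ DM p M := by
  refine ⟨1, fun _ => 1, fun _ => 1, 0, reduced_zero p, by simp [support_zero], ?_⟩
  rw [plusOp, opD]
  congr 1
  funext x
  rw [inducedOp_zero, add_zero]
  simp only [one_mul]
  have h1 : ∑ i : Fin (1+1), (x i).1 = (x 0).1 + (x 1).1 := Fin.sum_univ_two _
  have h2 : ∑ i : Fin (1+1), (x i).2 = (x 0).2 + (x 1).2 := Fin.sum_univ_two _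
  rw [h1, h2]
  rfl

/-- linear form polynomial -/
noncomputable def linForm {p m : ℕ} (c : Fin (m+1) → ZMod p) : MvPolynomial ℕ (ZMod p) :=
  ∑ j, C (c j) * X (j : ℕ)

lemma eval_linForm {p m : ℕ} (c : Fin (m+1) → ZMod p) (v : Fin (m+1) → ZMod p) :
    eval (fun k => if h : k < m + 1 then v ⟨k, h⟩ else 0) (linForm c) = ∑ j, c j * v j := by
  rw [linForm, map_sum]
  apply Finset.sum_congr rfl
  intro j _
  rw [map_mul, eval_C, eval_X, dif_pos j.isLt]

lemma linForm_homog {p m : ℕ} (c : Fin (m+1) → ZMod p) : (linForm c).IsHomogeneous 1 := by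
  rw [← mem_homogeneousSubmodule, linForm]
  apply Submodule.sum_mem
  intro j _
  rw [mem_homogeneousSubmodule]
  exact isHomogeneous_C_mul_X _ _

lemma degOK_aeval {p : ℕ} {M : Set ℕ} (g : ℕ → MvPolynomial ℕ (ZMod p))
    (hg : ∀ k, (g k).IsHomogeneous 1) {q : MvPolynomial ℕ (ZMod p)}
    (hq : ∀ d ∈ q.support, Finsupp.degree d ∈ M) :
    ∀ d ∈ (aeval g q).support, Finsupp.degree d ∈ M := by
  classical
  intro d hd
  rw [← support_sum_monomial_coeff q, map_sum] at hd
  obtain ⟨d', hd', hmem⟩ := Finset.mem_biUnion.mp (support_sum hd)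
  have hhom : (aeval g (monomial d' (coeff d' q))).IsHomogeneous (1 * Finsupp.degree d') :=
    (isHomogeneous_monomial _ rfl).aeval g hg
  have h2 : Finsupp.degree d = 1 * Finsupp.degree d' := by
    conv_lhs => rw [Finsupp.degree_eq_weight_one]
    exact hhom (Finsupp.mem_support_iff.mp hmem)
  rw [h2, one_mul]
  exact hq d' hd'

lemma sum_swap_mul {p n m : ℕ} (a : Fin (n+1) → ZMod p) (A : Fin (n+1) → Fin (m+1) → ZMod p)
    (u : Fin (m+1) → ZMod p) :
    ∑ i, a i * (∑ j, A i j * u j) = ∑ j, (∑ i, a i * A i j) * u j := by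
  simp_rw [Finset.mul_sum, Finset.sum_mul, mul_assoc]
  exact Finset.sum_comm

lemma inducedOp_aeval_lin {p n m : ℕ} (B : Fin (n+1) → Fin (m+1) → ZMod p)
    (q : MvPolynomial ℕ (ZMod p)) (v : Fin (m+1) → ZMod p) :
    inducedOp p m (aeval (fun k => if h : k < n + 1 then linForm (B ⟨k, h⟩) else 0) q) v
      = inducedOp p n q (fun i => ∑ j, B i j * v j) := by
  rw [inducedOp_eval, inducedOp_eval, aeval_eq_bind₁]
  have hev : (eval (fun i => if h : i < m + 1 then v ⟨i, h⟩ else 0) :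
      MvPolynomial ℕ (ZMod p) →+* ZMod p)
      = eval₂Hom (RingHom.id (ZMod p)) (fun i => if h : i < m + 1 then v ⟨i, h⟩ else 0) := rfl
  rw [hev, eval₂Hom_bind₁]
  apply eval₂Hom_congr rfl _ rfl
  funext k
  by_cases hk : k < n + 1
  · rw [dif_pos hk, dif_pos hk, ← hev, eval_linForm]
  · rw [dif_neg hk, dif_neg hk, map_zero]


lemma comp_closed {p : ℕ} [Fact p.Prime] (hp2 : 2 < p) {M : Set ℕ} (hM : IsPMinor p M) :
    OpProd (DM p M) (DM p M) ⊆ DM p M := by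
  rintro h ⟨n, m, f, g, hf, hg, rfl⟩
  obtain ⟨a, b, q, hqred, hqdeg, hfx⟩ := DM_elim hf
  choose A B Q hQred hQdeg hgx using fun i => DM_elim (hg i)
  classical
  set G : ℕ → MvPolynomial ℕ (ZMod p) :=
    fun k => if h : k < n + 1 then linForm (B ⟨k, h⟩) else 0 with hG
  set P₀ : MvPolynomial ℕ (ZMod p) :=
    (∑ i : Fin (n+1), C (a i) * Q i) + aeval G q with hP₀
  have hGhom : ∀ k, (G k).IsHomogeneous 1 := by
    intro k
    simp only [hG]
    by_cases hk : k < n + 1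
    · rw [dif_pos hk]; exact linForm_homog _
    · rw [dif_neg hk]; exact isHomogeneous_zero _ _ _
  have hP₀deg : ∀ d ∈ P₀.support, Finsupp.degree d ∈ M := by
    intro d hd
    rw [hP₀] at hd
    rcases Finset.mem_union.mp (support_add hd) with h' | h'
    · obtain ⟨i, _, hmem⟩ := Finset.mem_biUnion.mp (support_sum h')
      have : (C (a i) * Q i).support ⊆ (Q i).support := by
        rw [← smul_eq_C_mul]
        exact Finsupp.support_smul
      exact hQdeg i d (this hmem)
    · exact degOK_aeval G hGhom hqdeg d h'
  have hP : ∀ v : Fin (m+1) → ZMod p,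
      inducedOp p m (reducePoly p P₀) v
        = (∑ i, a i * inducedOp p m (Q i) v)
          + inducedOp p n q (fun i => ∑ j, B i j * v j) := by
    intro v
    rw [inducedOp_eval, eval_reducePoly, hP₀, map_add, map_sum]
    congr 1
    · apply Finset.sum_congr rfl
      intro i _
      rw [map_mul, eval_C]
      rfl
    · show inducedOp p m (aeval G q) v = _
      rw [hG]
      exact inducedOp_aeval_lin B q v
  refine ⟨m, fun j => ∑ i, a i * A i j, fun j => ∑ i, b i * B i j, reducePoly p P₀,
    reducePoly_reduced hp2 _, reducePoly_degOK hp2 hM hP₀deg, ?_⟩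
  rw [opD]
  congr 1
  funext x
  rw [hfx]
  have hsnd : ∀ i, (g i x).2 = ∑ j, B i j * (x j).2 := by
    intro i; rw [hgx i x]
  have hfst : ∀ i, (g i x).1 =
      (∑ j, A i j * (x j).1) + inducedOp p m (Q i) (fun j => (x j).2) := by
    intro i; rw [hgx i x]
  refine Prod.ext ?_ ?_
  · show (∑ i, a i * (g i x).1) + inducedOp p n q (fun i => (g i x).2) = _
    simp only [hfst, hsnd]
    simp only [mul_add, Finset.sum_add_distrib]
    rw [hP (fun j => (x j).2), sum_swap_mul]
    ring
  · show (∑ i, b i * (g i x).2) = _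
    simp only [hsnd]
    rw [sum_swap_mul]

lemma DM_isClone {p : ℕ} [Fact p.Prime] (hp2 : 2 < p) {M : Set ℕ} (hM : IsPMinor p M) :
    IsClone (DM p M) :=
  ⟨fun n j => proj_mem_DM n j, comp_closed hp2 hM⟩




open MvPolynomial

/-! ### separation -/

noncomputable def dE (e : ℕ) : ℕ →₀ ℕ := ∑ i ∈ Finset.range e, Finsupp.single i 1

lemma dE_apply (e k : ℕ) : dE e k = if k < e then 1 else 0 := by
  classical
  rw [dE, Finsupp.finset_sum_apply]
  simp_rw [Finsupp.single_apply]
  rw [Finset.sum_ite_eq' (Finset.range e) k (fun _ => (1:ℕ))]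
  simp [Finset.mem_range]

lemma degree_dE (e : ℕ) : Finsupp.degree (dE e) = e := by
  classical
  have hsupp : (dE e).support = Finset.range e := by
    ext k
    rw [Finsupp.mem_support_iff, dE_apply, Finset.mem_range]
    split <;> simp_all
  rw [Finsupp.degree_apply, hsupp]
  have : ∀ k ∈ Finset.range e, dE e k = 1 := by
    intro k hk
    rw [dE_apply, if_pos (Finset.mem_range.mp hk)]
  rw [Finset.sum_congr rfl this]
  simp

lemma supp_mono_one {p : ℕ} [Fact (1 < p)] (d : ℕ →₀ ℕ) :
    (monomial d (1 : ZMod p)).support = {d} := by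
  classical
  rw [support_monomial, if_neg one_ne_zero]

lemma opE_mem {p : ℕ} (hp2 : 2 < p) {M : Set ℕ} (e : ℕ) (he : 1 ≤ e) (heM : e ∈ M) :
    opD p (e-1) 0 0 (monomial (dE e) (1 : ZMod p)) ∈ DM p M := by
  haveI : Fact (1 < p) := ⟨by omega⟩
  have hsupp : (monomial (dE e) (1 : ZMod p)).support = {dE e} := supp_mono_one _
  refine ⟨e-1, 0, 0, monomial (dE e) 1, ?_, ?_, rfl⟩
  · intro d hd i
    rw [hsupp, Finset.mem_singleton] at hd
    subst hd
    rw [dE_apply]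
    split <;> omega
  · intro d hd
    rw [hsupp, Finset.mem_singleton] at hd
    subst hd
    rwa [degree_dE]

lemma opE_not_mem {p : ℕ} [Fact p.Prime] (hp2 : 2 < p) {M' : Set ℕ} (e : ℕ) (he : 1 ≤ e)
    (heM' : e ∉ M') :
    opD p (e-1) 0 0 (monomial (dE e) (1 : ZMod p)) ∉ DM p M' := by
  haveI : Fact (1 < p) := ⟨by omega⟩
  classical
  intro hmem
  rw [opD] at hmem
  obtain ⟨a, b, q, hqred, hqdeg, hx⟩ := DM_elim hmem
  -- evaluate at points of the form (0, v)
  have hind : ∀ v : Fin (e-1+1) → ZMod p,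
      inducedOp p (e-1) (monomial (dE e) (1 : ZMod p)) v = inducedOp p (e-1) q v := by
    intro v
    have := hx (fun j => (0, v j))
    have h1 := congrArg Prod.fst this
    simp only [zero_mul, mul_zero, Finset.sum_const_zero, zero_add] at h1
    exact h1
  -- replace q by its cleaned version
  have hind' : ∀ v : Fin (e-1+1) → ZMod p,
      inducedOp p (e-1) (monomial (dE e) (1 : ZMod p)) v = inducedOp p (e-1) (zmap p (e-1) q) v := by
    intro v
    rw [inducedOp_zmap]
    exact hind v
  have hzsupp := support_zmap p (e-1) q
  have heq : monomial (dE e) (1 : ZMod p) = zmap p (e-1) q := by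
    apply reduced_inj (n := e-1)
    · intro d hd i
      rw [supp_mono_one _, Finset.mem_singleton] at hd
      subst hd
      rw [dE_apply]
      split <;> omega
    · intro d hd i
      exact hqred d (Finset.mem_filter.mp (hzsupp hd)).1 i
    · intro d hd i hi
      rw [supp_mono_one _, Finset.mem_singleton] at hd
      subst hd
      rw [dE_apply] at hi
      by_contra hcon
      rw [if_neg (by omega)] at hi
      exact hi rfl
    · intro d hd i hi
      exact (Finset.mem_filter.mp (hzsupp hd)).2 i hi
    · exact hind'
  have hdE : dE e ∈ (zmap p (e-1) q).support := by
    rw [← heq, supp_mono_one _]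
    exact Finset.mem_singleton_self _
  have : Finsupp.degree (dE e) ∈ M' :=
    hqdeg _ (Finset.mem_filter.mp (hzsupp hdE)).1
  rw [degree_dE] at this
  exact heM' this

lemma DM_mono {p : ℕ} {M M' : Set ℕ} (h : M ⊆ M') : DM p M ⊆ DM p M' := by
  rintro x ⟨n, a, b, q, h1, h2, rfl⟩
  exact ⟨n, a, b, q, h1, fun d hd => h (h2 d hd), rfl⟩

lemma pminor_inter_Iic {p : ℕ} {M : Set ℕ} (hM : IsPMinor p M) (N : ℕ) :
    IsPMinor p (M ∩ Set.Iic N) := by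
  rintro n ⟨hn, hnN⟩ hgt
  exact ⟨hM n hn hgt, le_trans (Nat.sub_le _ _) hnN⟩

lemma exists_bound {p : ℕ} {M : Set ℕ} {F : Set (Ops (ZMod p × ZMod p))}
    (hF : F.Finite) (hsub : F ⊆ DM p M) : ∃ N, F ⊆ DM p (M ∩ Set.Iic N) := by
  classical
  have hex : ∀ h : Ops (ZMod p × ZMod p), ∃ N, h ∈ F → h ∈ DM p (M ∩ Set.Iic N) := by
    intro h
    by_cases hh : h ∈ F
    · obtain ⟨n, a, b, q, h1, h2, rfl⟩ := hsub hh
      refine ⟨q.totalDegree, fun _ => ⟨n, a, b, q, h1, ?_, rfl⟩⟩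
      intro d hd
      refine ⟨h2 d hd, ?_⟩
      have := le_totalDegree hd
      rwa [sumExp_eq_degree] at this
    · exact ⟨0, fun h' => absurd h' hh⟩
  choose N hN using hex
  refine ⟨hF.toFinset.sup N, ?_⟩
  intro h hh
  have h1 : h ∈ DM p (M ∩ Set.Iic (N h)) := hN h hh
  refine DM_mono ?_ h1
  intro t ⟨ht1, ht2⟩
  exact ⟨ht1, Set.mem_Iic.mpr
    (le_trans (Set.mem_Iic.mp ht2) (Finset.le_sup (hF.mem_toFinset.mpr hh)))⟩

lemma DM_not_finGen {p : ℕ} [Fact p.Prime] (hp2 : 2 < p) {M : Set ℕ} (hM : IsPMinor p M)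
    (hub : ∀ N, ∃ e ∈ M, N < e) : ¬ FinGenClone (DM p M) := by
  rintro ⟨F, hFfin, hFeq⟩
  have hFsub : F ⊆ DM p M := by
    rw [hFeq]
    intro x hx
    rw [cloneGen, Set.mem_sInter]
    intro C hC
    exact hC.2 hx
  obtain ⟨N, hN⟩ := exists_bound hFfin hFsub
  have hsub2 : DM p M ⊆ DM p (M ∩ Set.Iic N) := by
    rw [hFeq]
    exact Set.sInter_subset_of_mem ⟨DM_isClone hp2 (pminor_inter_Iic hM N), hN⟩
  obtain ⟨e, heM, heN⟩ := hub N
  have h1 := opE_mem hp2 e (by omega) heM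
  have h2 := opE_not_mem (M' := M ∩ Set.Iic N) hp2 e (by omega)
    (fun hmem => absurd hmem.2 (not_le.mpr heN))
  exact h2 (hsub2 h1)

/-! ### the family of p-minor sets -/

def Mset (p k : ℕ) : Set ℕ :=
  {n | ∃ m, n = m * (p-1) + 1} ∪ {n | ∃ m, m < k ∧ n = m * (p-1) + 2}

lemma Mset_pminor {p : ℕ} (hp2 : 2 < p) (k : ℕ) : IsPMinor p (Mset p k) := by
  rintro n (⟨m, rfl⟩ | ⟨m, hm, rfl⟩) hgt
  · have hm1 : 1 ≤ m := by
      rcases Nat.eq_zero_or_pos m with rfl | h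
      · omega
      · exact h
    left
    refine ⟨m - 1, ?_⟩
    have : m * (p-1) = (m-1) * (p-1) + (p-1) := by
      conv_lhs => rw [show m = (m - 1) + 1 by omega]
      ring
    omega
  · have hm1 : 1 ≤ m := by
      rcases Nat.eq_zero_or_pos m with rfl | h
      · omega
      · exact h
    right
    refine ⟨m - 1, by omega, ?_⟩
    have : m * (p-1) = (m-1) * (p-1) + (p-1) := by
      conv_lhs => rw [show m = (m - 1) + 1 by omega]
      ring
    omega

lemma Mset_unbounded {p : ℕ} (hp2 : 2 < p) (k : ℕ) : ∀ N, ∃ e ∈ Mset p k, N < e := by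
  intro N
  refine ⟨N * (p-1) + 1, Or.inl ⟨N, rfl⟩, ?_⟩
  have : N * 1 ≤ N * (p-1) := Nat.mul_le_mul_left N (by omega)
  omega

lemma Mset_sep {p : ℕ} (hp2 : 2 < p) {k j : ℕ} (hkj : k < j) :
    k * (p-1) + 2 ∈ Mset p j ∧ k * (p-1) + 2 ∉ Mset p k := by
  constructor
  · exact Or.inr ⟨k, hkj, rfl⟩
  · rintro (⟨m, hm⟩ | ⟨m, hm, hm2⟩)
    · -- m * (p-1) + 1 = k * (p-1) + 2 : impossible mod p-1
      have h1 : (1 + m * (p-1)) % (p-1) = (2 + k * (p-1)) % (p-1) := by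
        rw [show 1 + m * (p-1) = m * (p-1) + 1 by ring, ← hm]
        congr 1
        ring
      rw [Nat.add_mul_mod_self_right, Nat.add_mul_mod_self_right] at h1
      rw [Nat.mod_eq_of_lt (by omega)] at h1
      rcases Nat.lt_or_ge 3 p with h3 | h3
      · rw [Nat.mod_eq_of_lt (by omega)] at h1
        omega
      · have hp3 : p = 3 := by omega
        subst hp3
        simp at h1
    · -- m * (p-1) + 2 = k * (p-1) + 2 with m < k
      have : m * (p-1) = k * (p-1) := by omega
      have := Nat.eq_of_mul_eq_mul_right (show 0 < p - 1 by omega) this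
      omega


lemma DM_ne {p : ℕ} [Fact p.Prime] (hp2 : 2 < p) {k j : ℕ} (hkj : k < j) :
    DM p (Mset p k) ≠ DM p (Mset p j) := by
  intro h
  obtain ⟨hin, hout⟩ := Mset_sep hp2 hkj
  have h1 := opE_mem hp2 (k * (p-1) + 2) (by omega) hin
  rw [← h] at h1
  exact opE_not_mem hp2 (k * (p-1) + 2) (by omega) hout h1


end S2

/-- For a prime `p > 2`, there are infinitely many clones on
`ZMod p × ZMod p` which contain the componentwise addition `⊕` and are not
finitely generated. -/
theorem statement2 (p : ℕ) (hp : p.Prime) (hp2 : 2 < p) :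
    { C : Set (Ops (ZMod p × ZMod p)) |
        IsClone C ∧ plusOp (ZMod p × ZMod p) ∈ C ∧ ¬ FinGenClone C }.Infinite := by
  haveI : Fact p.Prime := ⟨hp⟩
  refine Set.infinite_of_injective_forall_mem
    (f := fun k : ℕ => S2.DM p (S2.Mset p k)) ?_ ?_
  · intro k j hkj
    rcases lt_trichotomy k j with h' | h' | h'
    · exact absurd hkj (S2.DM_ne hp2 h')
    · exact h'
    · exact absurd hkj.symm (S2.DM_ne hp2 h')
  · intro k
    exact ⟨S2.DM_isClone hp2 (S2.Mset_pminor hp2 k), S2.plus_mem_DM,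
      S2.DM_not_finGen hp2 (S2.Mset_pminor hp2 k) (S2.Mset_unbounded hp2 k)⟩
end

section
/- Let p be a prime and let M be a p-minor subset of ℕ₀. Then 𝒫(M) is a polynomial linearly closed clonoid, and 𝒞(M) is a linearly closed clonoid on Z_p. -/
namespace Stmt3Aux
open MvPolynomial

/-! ### Exponent reduction -/

noncomputable def redE (p : ℕ) (e : ℕ) : ℕ := if e = 0 then 0 else (e - 1) % (p - 1) + 1

noncomputable def redExp (p : ℕ) (d : ℕ →₀ ℕ) : ℕ →₀ ℕ :=
  d.mapRange (redE p) (by simp [redE])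

lemma redE_le (p : ℕ) (hp : 2 ≤ p) (e : ℕ) : redE p e ≤ p - 1 := by
  unfold redE
  split
  · omega
  · have := Nat.mod_lt (e - 1) (y := p - 1) (by omega)
    omega

lemma redE_eq_zero_iff (p : ℕ) (e : ℕ) : redE p e = 0 ↔ e = 0 := by
  unfold redE; split <;> omega

lemma redE_sub (p : ℕ) (e : ℕ) : ∃ k, e = redE p e + k * (p - 1) := by
  unfold redE
  split
  · exact ⟨0, by omega⟩
  · refine ⟨(e - 1) / (p - 1), ?_⟩
    have hda : (p - 1) * ((e - 1) / (p - 1)) + (e - 1) % (p - 1) = e - 1 :=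
      Nat.div_add_mod _ _
    have : (e - 1) / (p - 1) * (p - 1) = (p - 1) * ((e - 1) / (p - 1)) := Nat.mul_comm _ _
    omega

@[simp] lemma redExp_apply (p : ℕ) (d : ℕ →₀ ℕ) (i : ℕ) : redExp p d i = redE p (d i) := rfl

lemma redExp_support (p : ℕ) (d : ℕ →₀ ℕ) : (redExp p d).support = d.support := by
  ext i
  simp [Finsupp.mem_support_iff, redE_eq_zero_iff]

lemma redExp_degree (p : ℕ) (d : ℕ →₀ ℕ) :
    ∃ k, d.degree = (redExp p d).degree + k * (p - 1) := by
  classical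
  choose k hk using fun e => redE_sub p e
  refine ⟨∑ i ∈ d.support, k (d i), ?_⟩
  rw [Finsupp.degree_apply, Finsupp.degree_apply]
  rw [redExp_support, Finset.sum_mul, ← Finset.sum_add_distrib]
  exact Finset.sum_congr rfl fun i _ => by rw [redExp_apply]; exact hk (d i)

lemma pow_red (p : ℕ) (hp : p.Prime) (a : ZMod p) (e : ℕ) (he : 1 ≤ e) :
    a ^ e = a ^ ((e - 1) % (p - 1) + 1) := by
  haveI : Fact p.Prime := ⟨hp⟩
  rcases eq_or_ne a 0 with rfl | ha
  · rw [zero_pow (by omega), zero_pow (by omega)]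
  · have h1 : a ^ (p - 1) = 1 := ZMod.pow_card_sub_one_eq_one ha
    have hda : (p - 1) * ((e - 1) / (p - 1)) + (e - 1) % (p - 1) = e - 1 :=
      Nat.div_add_mod _ _
    have he' : e = (e - 1) % (p - 1) + 1 + (p - 1) * ((e - 1) / (p - 1)) := by omega
    calc a ^ e = a ^ ((e - 1) % (p - 1) + 1) * (a ^ (p - 1)) ^ ((e - 1) / (p - 1)) := by
          rw [← pow_mul, ← pow_add, ← he']
      _ = a ^ ((e - 1) % (p - 1) + 1) := by rw [h1, one_pow, mul_one]

/-! ### Polynomial reduction -/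

noncomputable def reduceP (p : ℕ) (f : MvPolynomial ℕ (ZMod p)) : MvPolynomial ℕ (ZMod p) :=
  ∑ d ∈ f.support, monomial (redExp p d) (f.coeff d)

lemma reduceP_support (p : ℕ) (f : MvPolynomial ℕ (ZMod p)) :
    (reduceP p f).support ⊆ f.support.image (redExp p) := by
  classical
  refine (MvPolynomial.support_sum
    (f := fun d => monomial (redExp p d) (f.coeff d))).trans ?_
  intro d' hd'
  simp only [Finset.mem_biUnion] at hd'
  obtain ⟨d, hd, hd'⟩ := hd'
  have := support_monomial_subset hd'
  simp only [Finset.mem_singleton] at this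
  subst this
  exact Finset.mem_image_of_mem _ hd

lemma reduceP_eval (p : ℕ) (hp : p.Prime) (f : MvPolynomial ℕ (ZMod p)) (x : ℕ → ZMod p) :
    eval x (reduceP p f) = eval x f := by
  classical
  rw [reduceP, map_sum]
  conv_rhs => rw [f.as_sum, map_sum]
  refine Finset.sum_congr rfl fun d _ => ?_
  rw [eval_monomial, eval_monomial]
  congr 1
  rw [Finsupp.prod, Finsupp.prod, redExp_support]
  refine Finset.prod_congr rfl fun i hi => ?_
  rw [Finsupp.mem_support_iff] at hi
  rw [redExp_apply, redE, if_neg hi]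
  exact (pow_red p hp (x i) (d i) (by omega)).symm

lemma minor_reach (p : ℕ) (M : Set ℕ)
    (hM : ∀ n ∈ M, n > p - 1 → n - (p - 1) ∈ M) :
    ∀ k m, 1 ≤ m → m + k * (p - 1) ∈ M → m ∈ M := by
  intro k
  induction k with
  | zero => simp
  | succ k ih =>
    intro m hm hmem
    refine ih m hm ?_
    have h1 : m + (k + 1) * (p - 1) > p - 1 := by nlinarith
    have := hM _ hmem h1
    have he : m + (k + 1) * (p - 1) - (p - 1) = m + k * (p - 1) := by
      have : (k + 1) * (p - 1) = k * (p - 1) + (p - 1) := by ring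
      omega
    rwa [he] at this

lemma reduceP_deg_mem (p : ℕ) (hp : p.Prime) (M : Set ℕ)
    (hM : ∀ n ∈ M, n > p - 1 → n - (p - 1) ∈ M)
    (f : MvPolynomial ℕ (ZMod p)) (hf : ∀ d ∈ f.support, d.degree ∈ M) :
    ∀ d' ∈ (reduceP p f).support, d'.degree ∈ M := by
  intro d' hd'
  obtain ⟨d, hd, rfl⟩ := Finset.mem_image.mp (reduceP_support p f hd')
  obtain ⟨k, hk⟩ := redExp_degree p d
  rcases Nat.eq_zero_or_pos (redExp p d).degree with h0 | h1
  · have hd0 : redExp p d = 0 := (Finsupp.degree_eq_zero_iff _).mp h0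
    have : d = 0 := by
      have hs := redExp_support p d
      rw [hd0] at hs
      simpa [Finsupp.support_eq_empty] using hs.symm
    subst this
    rw [hd0]
    simpa using hf 0 hd
  · exact minor_reach p M hM k _ h1 (hk ▸ hf d hd)

/-! ### Linear forms -/

noncomputable def LF (p : ℕ) (s : Finset ℕ) (a : ℕ → ZMod p) : MvPolynomial ℕ (ZMod p) :=
  ∑ i ∈ s, MvPolynomial.C (a i) * MvPolynomial.X i

lemma LF_hom (p : ℕ) (s : Finset ℕ) (a : ℕ → ZMod p) : (LF p s a).IsHomogeneous 1 := by
  refine IsHomogeneous.sum _ _ _ fun i _ => ?_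
  simpa using (isHomogeneous_C _ (a i)).mul (isHomogeneous_X _ i)

lemma LF_vars (p : ℕ) (hp : p.Prime) (s : Finset ℕ) (a : ℕ → ZMod p) :
    (LF p s a).vars ⊆ s := by
  haveI : Fact p.Prime := ⟨hp⟩
  classical
  refine (vars_sum_subset _ _).trans ?_
  intro j hj
  simp only [Finset.mem_biUnion] at hj
  obtain ⟨i, hi, hj⟩ := hj
  rcases eq_or_ne (a i) 0 with h0 | h0
  · simp [h0] at hj
  · rw [vars_C_mul _ h0, vars_X] at hj
    simp only [Finset.mem_singleton] at hj
    subst hj; exact hi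

lemma LF_eval (p : ℕ) (s : Finset ℕ) (a : ℕ → ZMod p) (x : ℕ → ZMod p) :
    eval x (LF p s a) = ∑ i ∈ s, a i * x i := by
  simp [LF]

lemma LF_mem_vars (p : ℕ) (s : Finset ℕ) (a : ℕ → ZMod p) {i : ℕ}
    (hi : i ∈ s) (ha : a i ≠ 0) : i ∈ (LF p s a).vars := by
  classical
  have hc : (LF p s a).coeff (Finsupp.single i 1) = a i := by
    rw [LF]
    rw [MvPolynomial.coeff_sum]
    rw [Finset.sum_eq_single_of_mem i hi]
    · simp [C_mul_X_eq_monomial, coeff_monomial]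
    · intro j hj hne
      rw [C_mul_X_eq_monomial, coeff_monomial, if_neg]
      intro hcon
      exact hne (by
        have := Finsupp.single_left_injective (α := ℕ) (Nat.one_ne_zero) hcon
        exact this)
  refine (mem_vars i).mpr ⟨Finsupp.single i 1, ?_, by simp⟩
  rw [mem_support_iff, hc]
  exact ha

/-! ### Homogeneity of substitution -/

lemma aeval_monomial_hom (p : ℕ) (g : ℕ → MvPolynomial ℕ (ZMod p)) (d : ℕ →₀ ℕ) (c : ZMod p)
    (hg : ∀ i ∈ d.support, (g i).IsHomogeneous 1) :
    ((aeval g) (monomial d c)).IsHomogeneous d.degree := by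
  classical
  set g' : ℕ → MvPolynomial ℕ (ZMod p) := fun i => if i ∈ d.support then g i else 0 with hg'
  have heq : (aeval g) (monomial d c) = (aeval g') (monomial d c) := by
    rw [aeval_monomial, aeval_monomial]
    congr 1
    rw [Finsupp.prod, Finsupp.prod]
    exact Finset.prod_congr rfl fun i hi => by rw [hg']; simp only [if_pos hi]
  rw [heq]
  have h := (isHomogeneous_monomial c (rfl : d.degree = d.degree)).aeval g'
    (n := 1) (fun i => by
      by_cases h : i ∈ d.support
      · have hgi : g' i = g i := by rw [hg']; exact if_pos h
        rw [hgi]; exact hg i h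
      · have hgi : g' i = 0 := by rw [hg']; exact if_neg h
        rw [hgi]; exact isHomogeneous_zero _ _ 1)
  simpa using h

lemma aeval_support_degree (p : ℕ) (f : MvPolynomial ℕ (ZMod p))
    (g : ℕ → MvPolynomial ℕ (ZMod p))
    (hg : ∀ i ∈ f.vars, (g i).IsHomogeneous 1)
    {d' : ℕ →₀ ℕ} (hd' : d' ∈ ((aeval g) f).support) :
    ∃ d ∈ f.support, d'.degree = d.degree := by
  classical
  have hrw : (aeval g) f = ∑ d ∈ f.support, (aeval g) (monomial d (f.coeff d)) := by
    conv_lhs => rw [f.as_sum, map_sum]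
  rw [hrw] at hd'
  have := MvPolynomial.support_sum hd'
  simp only [Finset.mem_biUnion] at this
  obtain ⟨d, hd, hmem⟩ := this
  refine ⟨d, hd, ?_⟩
  have hhom := aeval_monomial_hom p g d (f.coeff d)
    (fun i hi => hg i ((mem_vars i).mpr ⟨d, hd, hi⟩))
  have hw := hhom (mem_support_iff.mp hmem)
  rwa [show (Finsupp.weight (1 : ℕ → ℕ)) = Finsupp.degree from Finsupp.degree_eq_weight_one.symm] at hw


lemma ops_fun_eq {A : Type} {n : ℕ} {f f' : (Fin (n + 1) → A) → A}
    (h : (⟨n, f⟩ : Ops A) = ⟨n, f'⟩) : f = f' := by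
  simpa using h

lemma inducedOp_zero (p n : ℕ) :
    inducedOp p n (0 : MvPolynomial ℕ (ZMod p)) = fun _ => 0 := by
  funext x; simp [inducedOp]

lemma CM_char (p : ℕ) (M : Set ℕ) (n : ℕ) (f : (Fin (n + 1) → ZMod p) → ZMod p) :
    (⟨n, f⟩ : Ops (ZMod p)) ∈ CM p M ↔
      ∃ F : MvPolynomial ℕ (ZMod p), IsReducedPoly p F ∧ (∀ i ∈ F.vars, i < n + 1) ∧
        (∀ d ∈ F.support, (d.sum fun _ e => e) ∈ M) ∧ f = inducedOp p n F := by
  constructor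
  · rintro (⟨m, hm⟩ | ⟨m, F, hF0, hred, hvars, hdeg, hm⟩)
    · have hn : n = m := congrArg Sigma.fst hm
      subst hn
      have hfe := ops_fun_eq hm
      exact ⟨0, by intro d hd; simp at hd, by simp, by simp,
        by rw [hfe, inducedOp_zero]⟩
    · have hn : n = m := congrArg Sigma.fst hm
      subst hn
      exact ⟨F, hred, hvars, hdeg, ops_fun_eq hm⟩
  · rintro ⟨F, hred, hvars, hdeg, rfl⟩
    rcases eq_or_ne F 0 with rfl | hF0
    · exact Or.inl ⟨n, by rw [inducedOp_zero]⟩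
    · exact Or.inr ⟨n, F, hF0, hred, hvars, hdeg, rfl⟩

lemma lin_comb (p : ℕ) (M : Set ℕ) (n m : ℕ) (a : Fin (n + 1) → ZMod p)
    (F : Fin (n + 1) → MvPolynomial ℕ (ZMod p))
    (hred : ∀ i, IsReducedPoly p (F i))
    (hvars : ∀ i, ∀ j ∈ (F i).vars, j < m + 1)
    (hdeg : ∀ i, ∀ d ∈ (F i).support, (d.sum fun _ e => e) ∈ M) :
    ∃ G : MvPolynomial ℕ (ZMod p), IsReducedPoly p G ∧ (∀ j ∈ G.vars, j < m + 1) ∧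
      (∀ d ∈ G.support, (d.sum fun _ e => e) ∈ M) ∧
      (fun x => ∑ i, a i * inducedOp p m (F i) x) = inducedOp p m (G) := by
  classical
  have hsupp : (∑ i : Fin (n + 1), a i • F i).support ⊆
      Finset.univ.biUnion (fun i => (F i).support) := by
    refine (MvPolynomial.support_sum).trans ?_
    intro d hd
    simp only [Finset.mem_biUnion] at hd ⊢
    obtain ⟨i, hi, hdi⟩ := hd
    exact ⟨i, hi, MvPolynomial.support_smul hdi⟩
  refine ⟨∑ i : Fin (n + 1), a i • F i, ?_, ?_, ?_, ?_⟩
  · intro d hd i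
    obtain ⟨j, _, hj⟩ := Finset.mem_biUnion.mp (hsupp hd)
    exact hred j d hj i
  · intro j hj
    obtain ⟨d, hd, hjd⟩ := (mem_vars j).mp hj
    obtain ⟨i, _, hdi⟩ := Finset.mem_biUnion.mp (hsupp hd)
    exact hvars i j ((mem_vars j).mpr ⟨d, hdi, hjd⟩)
  · intro d hd
    obtain ⟨i, _, hdi⟩ := Finset.mem_biUnion.mp (hsupp hd)
    exact hdeg i d hdi
  · funext x
    show ∑ i, a i * inducedOp p m (F i) x
        = eval (fun j => if h : j < m + 1 then x ⟨j, h⟩ else 0) (∑ i : Fin (n + 1), a i • F i)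
    rw [map_sum]
    refine Finset.sum_congr rfl fun i _ => ?_
    rw [smul_eval]
    rfl

lemma comp_linear (p : ℕ) (hp : p.Prime) (M : Set ℕ) (hM : IsPMinor p M)
    (n m : ℕ) (F : MvPolynomial ℕ (ZMod p))
    (hvars : ∀ i ∈ F.vars, i < n + 1)
    (hdeg : ∀ d ∈ F.support, (d.sum fun _ e => e) ∈ M)
    (a : Fin (n + 1) → Fin (m + 1) → ZMod p) :
    ∃ G' : MvPolynomial ℕ (ZMod p), IsReducedPoly p G' ∧ (∀ i ∈ G'.vars, i < m + 1) ∧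
      (∀ d ∈ G'.support, (d.sum fun _ e => e) ∈ M) ∧
      (fun x : Fin (m + 1) → ZMod p => inducedOp p n F (fun i => ∑ j, a i j * x j))
        = inducedOp p m G' := by
  classical
  set b : ℕ → ℕ → ZMod p := fun i j =>
    if h : i < n + 1 then (if hj : j < m + 1 then a ⟨i, h⟩ ⟨j, hj⟩ else 0) else 0 with hb
  set Lp : ℕ → MvPolynomial ℕ (ZMod p) := fun i =>
    if i < n + 1 then LF p (Finset.range (m + 1)) (b i) else 0 with hLp
  set G : MvPolynomial ℕ (ZMod p) := (aeval Lp) F with hGdef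
  have hLphom : ∀ i ∈ F.vars, (Lp i).IsHomogeneous 1 := by
    intro i hi
    rw [hLp]
    simp only [if_pos (hvars i hi)]
    exact LF_hom p _ _
  have hGdeg : ∀ d ∈ G.support, d.degree ∈ M := by
    intro d hd
    obtain ⟨d0, hd0, hdd⟩ := aeval_support_degree p F Lp hLphom hd
    rw [hdd]; exact hdeg d0 hd0
  refine ⟨reduceP p G, ?_, ?_, ?_, ?_⟩
  · intro d hd i
    obtain ⟨d0, _, rfl⟩ := Finset.mem_image.mp (reduceP_support p G hd)
    rw [redExp_apply]
    exact redE_le p hp.two_le _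
  · intro i hi
    obtain ⟨d, hd, hid⟩ := (mem_vars i).mp hi
    obtain ⟨d0, hd0, rfl⟩ := Finset.mem_image.mp (reduceP_support p G hd)
    rw [redExp_support] at hid
    have hiG : i ∈ G.vars := (mem_vars i).mpr ⟨d0, hd0, hid⟩
    have hbu := vars_bind₁ Lp F hiG
    simp only [Finset.mem_biUnion] at hbu
    obtain ⟨i0, hi0, hiLp⟩ := hbu
    rw [hLp] at hiLp
    simp only [if_pos (hvars i0 hi0)] at hiLp
    have := LF_vars p hp _ _ hiLp
    simpa using this
  · intro d hd
    exact reduceP_deg_mem p hp M hM G hGdeg d hd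
  · funext x
    set x' : ℕ → ZMod p := fun j => if h : j < m + 1 then x ⟨j, h⟩ else 0 with hx'
    have hLpeval : ∀ i, eval x' (Lp i)
        = if h : i < n + 1 then ∑ j, a ⟨i, h⟩ j * x j else 0 := by
      intro i
      rw [hLp]
      by_cases h : i < n + 1
      · simp only [if_pos h, dif_pos h]
        rw [LF_eval]
        rw [← Fin.sum_univ_eq_sum_range (fun j => b i j * x' j) (m + 1)]
        refine Finset.sum_congr rfl fun j _ => ?_
        rw [hb, hx']
        simp [j.isLt, h]
      · simp only [if_neg h, dif_neg h, map_zero]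
    have hR : inducedOp p m (reduceP p G) x = eval (fun i => eval x' (Lp i)) F := by
      show eval x' (reduceP p G) = _
      rw [reduceP_eval p hp, hGdef, aeval_def, MvPolynomial.algebraMap_eq, ← eval_assoc]
      rfl
    have hL : inducedOp p n F (fun i => ∑ j, a i j * x j)
        = eval (fun i => eval x' (Lp i)) F := by
      show eval (fun i => if h : i < n + 1 then ∑ j, a ⟨i, h⟩ j * x j else 0) F = _
      have harg : (fun i => if h : i < n + 1 then ∑ j, a ⟨i, h⟩ j * x j else 0)
          = fun i => eval x' (Lp i) := funext fun i => (hLpeval i).symm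
      rw [harg]
    exact hL.trans hR.symm

end Stmt3Aux
/-- For a prime `p` and a `p`-minor subset `M`, `𝒫(M)` is a polynomial
linearly closed clonoid and `𝒞(M)` is a linearly closed clonoid on `ZMod p`. -/
theorem statement3 (p : ℕ) (hp : p.Prime) (M : Set ℕ) (hM : IsPMinor p M) :
    IsPLC p (PM p M) ∧ IsLCC p (CM p M) := by
  classical
  haveI : Fact p.Prime := ⟨hp⟩
  constructor
  · refine ⟨⟨0, by intro d hd; simp at hd⟩, ?_, ?_⟩
    · -- Lin · PM ⊆ PM
      rintro h ⟨n, f, g, ⟨s, a, rfl⟩, hvars, hg, rfl⟩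
      intro d' hd'
      have hrw : (MvPolynomial.aeval g) (∑ i ∈ s, MvPolynomial.C (a i) * MvPolynomial.X i)
          = ∑ i ∈ s, (a i) • g i := by
        rw [map_sum]
        refine Finset.sum_congr rfl fun i _ => ?_
        rw [map_mul, MvPolynomial.aeval_C, MvPolynomial.aeval_X,
          MvPolynomial.algebraMap_eq, ← MvPolynomial.smul_eq_C_mul]
      rw [hrw] at hd'
      obtain ⟨i, hi, hdi⟩ := Finset.mem_biUnion.mp (MvPolynomial.support_sum hd')
      have ha : a i ≠ 0 := by
        intro h0
        rw [h0, zero_smul] at hdi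
        simp at hdi
      have hin : i < n := hvars i (Stmt3Aux.LF_mem_vars p s a hi ha)
      exact hg i hin d' (MvPolynomial.support_smul hdi)
    · -- PM · Lin ⊆ PM
      rintro h ⟨n, f, g, hf, hvars, hg, rfl⟩
      intro d' hd'
      have hhom : ∀ i ∈ f.vars, (g i).IsHomogeneous 1 := by
        intro i hi
        obtain ⟨s, a, hgi⟩ := hg i (hvars i hi)
        rw [hgi]
        exact Stmt3Aux.LF_hom p s a
      obtain ⟨d, hd, hdd⟩ := Stmt3Aux.aeval_support_degree p f g hhom hd'
      show (d'.sum fun _ e => e) ∈ M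
      show d'.degree ∈ M
      rw [hdd]
      exact hf d hd
  · refine ⟨⟨⟨0, fun _ => 0⟩, Or.inl ⟨0, rfl⟩⟩, ?_, ?_⟩
    · -- Lin · CM ⊆ CM
      rintro h ⟨n, m, f, g, hf, hg, rfl⟩
      obtain ⟨n', a, heq⟩ := hf
      have hn : n = n' := congrArg Sigma.fst heq
      subst hn
      have hf2 := Stmt3Aux.ops_fun_eq heq
      choose F hred hvars hdeg hfun using fun i => (Stmt3Aux.CM_char p M m (g i)).mp (hg i)
      obtain ⟨G, h1, h2, h3, h4⟩ := Stmt3Aux.lin_comb p M n m a F hred hvars hdeg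
      refine (Stmt3Aux.CM_char p M m _).mpr ⟨G, h1, h2, h3, ?_⟩
      funext x
      rw [hf2]
      have : ∀ i, g i x = inducedOp p m (F i) x := fun i => by rw [hfun i]
      simp only [this]
      exact congrFun h4 x
    · -- CM · Lin ⊆ CM
      rintro h ⟨n, m, f, g, hf, hg, rfl⟩
      obtain ⟨F, hred, hvarsF, hdegF, hfF⟩ := (Stmt3Aux.CM_char p M n f).mp hf
      have hg' : ∀ i, ∃ b : Fin (m + 1) → ZMod p, g i = fun x => ∑ j, b j * x j := by
        intro i
        obtain ⟨m', b, heq⟩ := hg i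
        have hm : m = m' := congrArg Sigma.fst heq
        subst hm
        exact ⟨b, Stmt3Aux.ops_fun_eq heq⟩
      choose a hafun using hg'
      obtain ⟨G', h1, h2, h3, h4⟩ :=
        Stmt3Aux.comp_linear p hp M hM n m F hvarsF hdegF a
      refine (Stmt3Aux.CM_char p M m _).mpr ⟨G', h1, h2, h3, ?_⟩
      funext x
      rw [hfF]
      have : (fun i => g i x) = fun i : Fin (n + 1) => ∑ j, a i j * x j := by
        funext i
        rw [hafun i]
      rw [this]
      exact congrFun h4 x
end

section
/- Let p be a prime and let M₁, M₂ be p-minor subsets of ℕ₀. Then 𝒞(M₁ ∩ M₂) = 𝒞(M₁) ∩ 𝒞(M₂) and 𝒞(M₁ ∪ M₂) = 𝒞(M₁) + 𝒞(M₂); that is, 𝒞 is a lattice homomorphism from the lattice of p-minor subsets (under intersection and union) to the lattice of linearly closed clonoids on Z_p (under intersection and sum). -/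
namespace St5Aux

open MvPolynomial

lemma inducedOp_zero (p n : ℕ) : inducedOp p n 0 = fun _ => 0 := by
  funext x; simp [inducedOp]

lemma inducedOp_add (p n : ℕ) (f g : MvPolynomial ℕ (ZMod p)) :
    inducedOp p n (f + g) = fun x => inducedOp p n f x + inducedOp p n g x := by
  funext x; simp [inducedOp]

lemma vars_mono {p : ℕ} {f g : MvPolynomial ℕ (ZMod p)} (h : f.support ⊆ g.support) :
    f.vars ⊆ g.vars := by
  intro i hi
  rw [mem_vars] at hi ⊢
  obtain ⟨d, hd, hdi⟩ := hi
  exact ⟨d, h hd, hdi⟩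

lemma induced_zero (p : ℕ) (hp : p.Prime) (n : ℕ) (f : MvPolynomial ℕ (ZMod p))
    (hred : IsReducedPoly p f) (hv : ∀ i ∈ f.vars, i < n + 1)
    (h0 : ∀ x, inducedOp p n f x = 0) : f = 0 := by
  haveI := Fact.mk hp
  obtain ⟨g, hg⟩ := exists_rename_eq_of_vars_subset_range f (Fin.val : Fin (n+1) → ℕ)
    Fin.val_injective (by
      intro i hi
      exact ⟨⟨i, hv i (by exact_mod_cast hi)⟩, rfl⟩)
  have hgz : g = 0 := by
    apply eq_zero_of_eval_eq_zero
    · intro x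
      have := h0 x
      rw [inducedOp, ← hg, eval_rename] at this
      have hx : ((fun i => if h : i < n + 1 then x ⟨i, h⟩ else 0) ∘ Fin.val) = x := by
        funext j
        simp [Function.comp, j.isLt]
      rwa [hx] at this
    · rw [mem_restrictDegree]
      intro s hs i
      have hcr := coeff_rename_mapDomain (Fin.val : Fin (n+1) → ℕ) Fin.val_injective g s
      rw [hg] at hcr
      have hmem : Finsupp.mapDomain (Fin.val : Fin (n+1) → ℕ) s ∈ f.support := by
        rw [mem_support_iff, hcr]
        exact mem_support_iff.mp hs
      have := hred _ hmem i.val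
      rw [Finsupp.mapDomain_apply Fin.val_injective] at this
      simpa [ZMod.card] using this
  rw [← hg, hgz, map_zero]

lemma induced_unique (p : ℕ) (hp : p.Prime) (n : ℕ) (f₁ f₂ : MvPolynomial ℕ (ZMod p))
    (hred₁ : IsReducedPoly p f₁) (hv₁ : ∀ i ∈ f₁.vars, i < n + 1)
    (hred₂ : IsReducedPoly p f₂) (hv₂ : ∀ i ∈ f₂.vars, i < n + 1)
    (he : inducedOp p n f₁ = inducedOp p n f₂) : f₁ = f₂ := by
  classical
  have h0 : f₁ - f₂ = 0 := by
    apply induced_zero p hp n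
    · intro d hd i
      rcases Finset.mem_union.mp (support_sub ℕ f₁ f₂ hd) with h | h
      · exact hred₁ d h i
      · exact hred₂ d h i
    · intro i hi
      rcases Finset.mem_union.mp (vars_sub_subset (p := f₁) (q := f₂) hi) with h | h
      · exact hv₁ i h
      · exact hv₂ i h
    · intro x
      simp only [inducedOp, map_sub]
      rw [show (MvPolynomial.eval fun i => if h : i < n + 1 then x ⟨i, h⟩ else 0) f₁
          = inducedOp p n f₁ x from rfl, he]
      simp [inducedOp]
  exact sub_eq_zero.mp h0

lemma mem_CM (p n : ℕ) (M : Set ℕ) (f : MvPolynomial ℕ (ZMod p)) (hred : IsReducedPoly p f)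
    (hv : ∀ i ∈ f.vars, i < n + 1) (hd : ∀ d ∈ f.support, (d.sum fun _ e => e) ∈ M) :
    (⟨n, inducedOp p n f⟩ : Ops (ZMod p)) ∈ CM p M := by
  by_cases hf : f = 0
  · left
    exact ⟨n, by rw [hf, inducedOp_zero]⟩
  · right
    exact ⟨n, f, hf, hred, hv, hd, rfl⟩

lemma CM_elim (p n : ℕ) (M : Set ℕ) (a : (Fin (n+1) → ZMod p) → ZMod p)
    (h : (⟨n, a⟩ : Ops (ZMod p)) ∈ CM p M) :
    ∃ f : MvPolynomial ℕ (ZMod p), IsReducedPoly p f ∧ (∀ i ∈ f.vars, i < n + 1) ∧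
      (∀ d ∈ f.support, (d.sum fun _ e => e) ∈ M) ∧ a = inducedOp p n f := by
  rcases h with ⟨m, hm⟩ | ⟨m, f, _hf, hred, hv, hd, hm⟩
  · obtain ⟨rfl, h2⟩ := Sigma.mk.inj_iff.mp hm
    refine ⟨0, by simp [IsReducedPoly], by simp, by simp, ?_⟩
    rw [inducedOp_zero, eq_of_heq h2]
  · obtain ⟨rfl, h2⟩ := Sigma.mk.inj_iff.mp hm
    exact ⟨f, hred, hv, hd, eq_of_heq h2⟩

lemma split_poly (p : ℕ) (f : MvPolynomial ℕ (ZMod p)) (P : (ℕ →₀ ℕ) → Prop)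
    [DecidablePred P] :
    ∃ f₁ f₂ : MvPolynomial ℕ (ZMod p), f = f₁ + f₂ ∧
      f₁.support ⊆ f.support.filter (fun d => P d) ∧
      f₂.support ⊆ f.support.filter (fun d => ¬ P d) := by
  classical
  have key : ∀ s : Finset (ℕ →₀ ℕ),
      (∑ d ∈ s, monomial d (coeff d f)).support ⊆ s := by
    intro s e he
    rw [mem_support_iff] at he
    by_contra hne
    apply he
    rw [coeff_sum]
    simp only [coeff_monomial]
    rw [Finset.sum_ite_eq' s e (fun d => coeff d f)]
    simp [hne]
  refine ⟨∑ d ∈ f.support.filter (fun d => P d), monomial d (coeff d f),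
    ∑ d ∈ f.support.filter (fun d => ¬ P d), monomial d (coeff d f), ?_, key _, key _⟩
  rw [Finset.sum_filter_add_sum_filter_not]
  exact as_sum f

end St5Aux

open St5Aux MvPolynomial in
/-- `𝒞` is a lattice homomorphism: it sends intersections of `p`-minor
subsets to intersections, and unions to sums of linearly closed clonoids. -/
theorem statement5 (p : ℕ) (hp : p.Prime) (M₁ M₂ : Set ℕ)
    (h₁ : IsPMinor p M₁) (h₂ : IsPMinor p M₂) :
    CM p (M₁ ∩ M₂) = CM p M₁ ∩ CM p M₂ ∧
    CM p (M₁ ∪ M₂) = LCCsum p (CM p M₁) (CM p M₂) := by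
  classical
  constructor
  · ext h
    obtain ⟨n, a⟩ := h
    constructor
    · intro hh
      obtain ⟨f, hred, hv, hd, rfl⟩ := CM_elim p n _ a hh
      exact ⟨mem_CM p n M₁ f hred hv (fun d hd' => (hd d hd').1),
             mem_CM p n M₂ f hred hv (fun d hd' => (hd d hd').2)⟩
    · rintro ⟨hA, hB⟩
      obtain ⟨f₁, hred₁, hv₁, hd₁, rfl⟩ := CM_elim p n _ a hA
      obtain ⟨f₂, hred₂, hv₂, hd₂, he⟩ := CM_elim p n _ _ hB
      have hfe : f₁ = f₂ := induced_unique p hp n f₁ f₂ hred₁ hv₁ hred₂ hv₂ he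
      exact mem_CM p n (M₁ ∩ M₂) f₁ hred₁ hv₁
        (fun d hd' => ⟨hd₁ d hd', hd₂ d (hfe ▸ hd')⟩)
  · ext h
    obtain ⟨n, a⟩ := h
    constructor
    · intro hh
      obtain ⟨f, hred, hv, hd, rfl⟩ := CM_elim p n _ a hh
      obtain ⟨f₁, f₂, hsum, hs₁, hs₂⟩ :=
        split_poly p f (fun d => (d.sum fun _ e => e) ∈ M₁)
      have hsub₁ : f₁.support ⊆ f.support := fun d hd' =>
        (Finset.mem_filter.mp (hs₁ hd')).1
      have hsub₂ : f₂.support ⊆ f.support := fun d hd' =>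
        (Finset.mem_filter.mp (hs₂ hd')).1
      refine ⟨n, inducedOp p n f₁, inducedOp p n f₂,
        mem_CM p n M₁ f₁ (fun d hd' i => hred d (hsub₁ hd') i)
          (fun i hi => hv i (vars_mono hsub₁ hi))
          (fun d hd' => (Finset.mem_filter.mp (hs₁ hd')).2),
        mem_CM p n M₂ f₂ (fun d hd' i => hred d (hsub₂ hd') i)
          (fun i hi => hv i (vars_mono hsub₂ hi))
          (fun d hd' => ?_), ?_⟩
      · rcases hd d (hsub₂ hd') with h | h
        · exact absurd h (Finset.mem_filter.mp (hs₂ hd')).2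
        · exact h
      · rw [show inducedOp p n f = fun x => inducedOp p n f₁ x + inducedOp p n f₂ x from
          by rw [hsum, inducedOp_add]]
    · rintro ⟨m, u, v, hu, hv', heq⟩
      obtain ⟨rfl, h2⟩ := Sigma.mk.inj_iff.mp heq
      obtain ⟨f₁, hred₁, hv₁, hd₁, rfl⟩ := CM_elim p n _ u hu
      obtain ⟨f₂, hred₂, hv₂, hd₂, rfl⟩ := CM_elim p n _ v hv'
      rw [eq_of_heq h2, ← inducedOp_add]
      apply mem_CM p n (M₁ ∪ M₂) (f₁ + f₂)
      · intro d hd i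
        rcases Finset.mem_union.mp (support_add hd) with h | h
        · exact hred₁ d h i
        · exact hred₂ d h i
      · intro i hi
        rw [mem_vars] at hi
        obtain ⟨d, hd, hdi⟩ := hi
        rcases Finset.mem_union.mp (support_add hd) with h | h
        · exact hv₁ i ((mem_vars i).mpr ⟨d, h, hdi⟩)
        · exact hv₂ i ((mem_vars i).mpr ⟨d, h, hdi⟩)
      · intro d hd
        rcases Finset.mem_union.mp (support_add hd) with h | h
        · exact Or.inl (hd₁ d h)
        · exact Or.inr (hd₂ d h)
end

section
/- Let p be a prime and let M₁, M₂ be p-minor subsets of ℕ₀. Then M₁ ⊆ M₂ if and only if 𝒞(M₁) ⊆ 𝒞(M₂). -/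
open MvPolynomial in
/-- A reduced polynomial with variables below `N + 1` whose induced operation is zero
is the zero polynomial. -/
lemma reduced_eq_zero_of_inducedOp_zero (p N : ℕ) (hp : p.Prime) (f : MvPolynomial ℕ (ZMod p))
    (hred : IsReducedPoly p f)
    (hvars : ∀ i ∈ f.vars, i < N + 1)
    (hz : ∀ x : Fin (N + 1) → ZMod p, inducedOp p N f x = 0) :
    f = 0 := by
  haveI : Fact p.Prime := ⟨hp⟩
  obtain ⟨q, rfl⟩ := exists_rename_eq_of_vars_subset_range f (Fin.val : Fin (N + 1) → ℕ)
    Fin.val_injective (fun i hi => ⟨⟨i, hvars i hi⟩, rfl⟩)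
  suffices hq : q = 0 by rw [hq, map_zero]
  apply MvPolynomial.eq_zero_of_eval_eq_zero
  · intro v
    have h := hz v
    rw [inducedOp, eval_rename] at h
    have henv : ((fun i => if h : i < N + 1 then v ⟨i, h⟩ else 0) ∘ (Fin.val : Fin (N+1) → ℕ)) = v := by
      funext j
      simp [j.isLt]
      intro hj; exact absurd j.isLt (by omega)
    rwa [henv] at h
  · rw [mem_restrictDegree]
    intro s hs i
    have hms : Finsupp.mapDomain (Fin.val : Fin (N + 1) → ℕ) s ∈
        (rename (Fin.val : Fin (N + 1) → ℕ) q).support := by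
      classical
      rw [support_rename_of_injective Fin.val_injective]
      exact Finset.mem_image_of_mem _ hs
    have := hred _ hms i.val
    rw [Finsupp.mapDomain_apply Fin.val_injective] at this
    rw [ZMod.card p]
    exact this

open MvPolynomial in
/-- Uniqueness of reduced representations. -/
lemma reduced_unique (p N : ℕ) (hp : p.Prime) (f g : MvPolynomial ℕ (ZMod p))
    (hfred : IsReducedPoly p f) (hgred : IsReducedPoly p g)
    (hfvars : ∀ i ∈ f.vars, i < N + 1) (hgvars : ∀ i ∈ g.vars, i < N + 1)
    (heq : inducedOp p N f = inducedOp p N g) : f = g := by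
  classical
  have h0 : f - g = 0 := by
    apply reduced_eq_zero_of_inducedOp_zero p N hp
    · intro d hd i
      rcases Finset.mem_union.mp (MvPolynomial.support_sub _ f g hd) with h | h
      · exact hfred d h i
      · exact hgred d h i
    · intro i hi
      rcases Finset.mem_union.mp (MvPolynomial.vars_sub_subset (p := f) (q := g) hi) with h | h
      · exact hfvars i h
      · exact hgvars i h
    · intro x
      simp only [inducedOp, map_sub]
      have := congrFun heq x
      simp only [inducedOp] at this
      rw [this, sub_self]
  exact sub_eq_zero.mp h0

/-- For `p`-minor subsets `M₁, M₂`: `M₁ ⊆ M₂` iff `𝒞(M₁) ⊆ 𝒞(M₂)`. -/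
theorem statement6 (p : ℕ) (hp : p.Prime) (M₁ M₂ : Set ℕ)
    (h₁ : IsPMinor p M₁) (h₂ : IsPMinor p M₂) :
    M₁ ⊆ M₂ ↔ CM p M₁ ⊆ CM p M₂ := by
  haveI : Fact p.Prime := ⟨hp⟩
  constructor
  · intro hM h hh
    rcases hh with hz | ⟨n, f, hf0, hfred, hfvars, hfdeg, hfe⟩
    · exact Or.inl hz
    · exact Or.inr ⟨n, f, hf0, hfred, hfvars, fun d hd => hM (hfdeg d hd), hfe⟩
  · intro hC m hm
    -- construct the monomial of total degree m
    have hp2 : 2 ≤ p := hp.two_le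
    have hp1 : 1 ≤ p - 1 := by omega
    set q := m / (p - 1) with hqdef
    set r := m % (p - 1) with hrdef
    have hrlt : r < p - 1 := Nat.mod_lt _ (by omega)
    have hqr : (p - 1) * q + r = m := Nat.div_add_mod m (p - 1)
    classical
    set dfun : ℕ → ℕ := fun i => if i < q then p - 1 else if i = q then r else 0 with hdfun
    set d : ℕ →₀ ℕ := Finsupp.onFinset (Finset.range (q + 1)) dfun
      (by intro i hi; simp only [hdfun] at hi; rw [Finset.mem_range]; by_contra hc; push_neg at hc
          rw [if_neg (by omega), if_neg (by omega)] at hi; exact hi rfl) with hd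
    have hdsupp : d.support ⊆ Finset.range (q + 1) := Finsupp.support_onFinset_subset
    have hdapply : ∀ i, d i = dfun i := fun i => rfl
    have hdsum : (d.sum fun _ e => e) = m := by
      rw [Finsupp.sum]
      rw [Finset.sum_subset hdsupp (by intro x _ hx; exact Finsupp.notMem_support_iff.mp hx)]
      have : ∀ i ∈ Finset.range (q + 1), d i = dfun i := fun i _ => rfl
      rw [Finset.sum_congr rfl this]
      rw [Finset.sum_range_succ]
      have h1 : ∑ i ∈ Finset.range q, dfun i = q * (p - 1) := by
        rw [Finset.sum_congr rfl (fun i hi => by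
          simp only [hdfun]; rw [if_pos (Finset.mem_range.mp hi)])]
        simp [Finset.sum_const, mul_comm]
      rw [h1]
      have h2 : (if q < q then p - 1 else if q = q then r else 0) = r := by simp
      rw [h2]
      rw [mul_comm] at hqr
      omega
    set f : MvPolynomial ℕ (ZMod p) := MvPolynomial.monomial d 1 with hf
    have hf0 : f ≠ 0 := by
      rw [hf]
      simp only [ne_eq, MvPolynomial.monomial_eq_zero]
      exact one_ne_zero
    have hfsupp : f.support = {d} := by
      rw [hf, MvPolynomial.support_monomial, if_neg one_ne_zero]
    have hfred : IsReducedPoly p f := by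
      intro e he i
      rw [hfsupp, Finset.mem_singleton] at he
      subst he
      rw [hdapply]
      simp only [hdfun]
      split
      · exact le_refl _
      · split <;> omega
    have hfvars : ∀ i ∈ f.vars, i < q + 1 := by
      intro i hi
      rw [hf, MvPolynomial.vars_monomial one_ne_zero] at hi
      exact Finset.mem_range.mp (hdsupp hi)
    have hfdeg : ∀ e ∈ f.support, (e.sum fun _ k => k) ∈ M₁ := by
      intro e he
      rw [hfsupp, Finset.mem_singleton] at he
      subst he
      rw [hdsum]; exact hm
    have hmem : (⟨q, inducedOp p q f⟩ : Ops (ZMod p)) ∈ CM p M₁ :=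
      Or.inr ⟨q, f, hf0, hfred, hfvars, hfdeg, rfl⟩
    have hone : inducedOp p q f (fun _ => 1) = 1 := by
      rw [inducedOp, hf, MvPolynomial.eval_monomial, one_mul, Finsupp.prod]
      apply Finset.prod_eq_one
      intro i hi
      have : i < q + 1 := Finset.mem_range.mp (hdsupp hi)
      rw [dif_pos this, one_pow]
    rcases hC hmem with ⟨n, hn⟩ | ⟨n, g, hg0, hgred, hgvars, hgdeg, hge⟩
    · -- inducedOp is not the zero operation
      obtain ⟨hnq, hfe⟩ := Sigma.mk.inj_iff.mp hn
      subst hnq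
      have := congrFun (eq_of_heq hfe) (fun _ => 1)
      rw [hone] at this
      exact absurd this one_ne_zero
    · obtain ⟨hnq, hfe⟩ := Sigma.mk.inj_iff.mp hge
      subst hnq
      have hfg : f = g := reduced_unique p q hp f g hfred hgred hfvars hgvars (eq_of_heq hfe)
      have : d ∈ g.support := by rw [← hfg, hfsupp]; exact Finset.mem_singleton_self d
      have := hgdeg d this
      rwa [hdsum] at this
end

section
/- Let p be a prime and let M₁, M₂ be p-minor subsets of ℕ₀. If 𝒞(M₁) = 𝒞(M₂), then M₁ = M₂ (i.e., the map 𝒞 is injective). -/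
open MvPolynomial in
lemma reduced_induced_inj (p n : ℕ) (hp : p.Prime) (f g : MvPolynomial ℕ (ZMod p))
    (hf : IsReducedPoly p f) (hg : IsReducedPoly p g)
    (hvf : ∀ i ∈ f.vars, i < n + 1) (hvg : ∀ i ∈ g.vars, i < n + 1)
    (heq : inducedOp p n f = inducedOp p n g) : f = g := by
  haveI : Fact p.Prime := ⟨hp⟩
  classical
  set s : Set ℕ := Set.Iio (n + 1) with hs
  have hfin : s.Finite := Set.finite_Iio _
  haveI : Finite ↥s := hfin.to_subtype
  have hD : f - g ∈ MvPolynomial.supported (ZMod p) s := by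
    rw [mem_supported]
    intro i hi
    have := vars_sub_subset (p := f) (q := g) hi
    rcases Finset.mem_union.1 this with h' | h'
    · exact hvf i h'
    · exact hvg i h'
  rw [supported_eq_range_rename, AlgHom.mem_range] at hD
  obtain ⟨E, hE⟩ := hD
  have hcoe : Function.Injective ((↑) : s → ℕ) := Subtype.val_injective
  have hE0 : E = 0 := by
    apply MvPolynomial.eq_zero_of_eval_eq_zero
    · intro v
      have hthis := congrFun heq (fun j : Fin (n + 1) => v ⟨j.1, j.2⟩)
      set w : ℕ → ZMod p := fun i => if h : i < n + 1 then
          (fun j : Fin (n + 1) => v ⟨j.1, j.2⟩) ⟨i, h⟩ else 0 with hwdef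
      have hw : w ∘ ((↑) : s → ℕ) = v := by
        funext j
        rcases j with ⟨i, hi⟩
        exact dif_pos hi
      calc eval v E = eval (w ∘ ((↑) : s → ℕ)) E := by rw [hw]
        _ = eval w (rename ((↑) : s → ℕ) E) := by rw [eval_rename]
        _ = 0 := by
            rw [hE]
            simp only [map_sub]
            exact sub_eq_zero.2 hthis
    · rw [mem_restrictDegree]
      intro d hd i
      have hco : coeff (d.mapDomain (↑)) (rename ((↑) : s → ℕ) E) = coeff d E :=
        coeff_rename_mapDomain _ hcoe E d
      rw [hE] at hco
      have hdm : d.mapDomain (↑) ∈ (f - g).support := by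
        rw [mem_support_iff, hco]
        exact mem_support_iff.1 hd
      have hmem := MvPolynomial.support_sub ℕ f g hdm
      have hdi : d i = (d.mapDomain ((↑) : s → ℕ)) i := (Finsupp.mapDomain_apply hcoe d i).symm
      rw [ZMod.card, hdi]
      rcases Finset.mem_union.1 hmem with h' | h'
      · exact hf _ h' _
      · exact hg _ h' _
  rw [hE0, map_zero] at hE
  exact sub_eq_zero.1 hE.symm

open MvPolynomial in
lemma CM_subset_aux (p : ℕ) (hp : p.Prime) (M₁ M₂ : Set ℕ)
    (h : CM p M₁ ⊆ CM p M₂) : M₁ ⊆ M₂ := by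
  haveI : Fact p.Prime := ⟨hp⟩
  classical
  intro n hn
  have hp1 : 0 < p - 1 := by have := hp.two_le; omega
  set q := n / (p - 1) with hq
  set r := n % (p - 1) with hr
  have hrlt : r < p - 1 := Nat.mod_lt _ hp1
  set d : ℕ →₀ ℕ := Finsupp.onFinset (Finset.range (q + 1))
    (fun i => if i < q then p - 1 else if i = q then r else 0)
    (fun i hi => by
      simp only [Finset.mem_range]
      by_contra hc
      push_neg at hc
      have h1 : ¬ i < q := by omega
      have h2 : i ≠ q := by omega
      simp [h1, h2] at hi) with hd
  have hdapp : ∀ i, d i = if i < q then p - 1 else if i = q then r else 0 := fun i => rfl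
  have hdle : ∀ i, d i ≤ p - 1 := by
    intro i
    rw [hdapp]
    split_ifs <;> omega
  have hsupp : ∀ i ∈ d.support, i < q + 1 := by
    intro i hi
    rw [Finsupp.mem_support_iff, hdapp] at hi
    by_contra hc
    push_neg at hc
    have h1 : ¬ i < q := by omega
    have h2 : i ≠ q := by omega
    simp [h1, h2] at hi
  have hsum : (d.sum fun _ e => e) = n := by
    have h1 : (d.sum fun _ e => e) = ∑ i ∈ Finset.range (q + 1), d i :=
      Finsupp.sum_of_support_subset d
        (fun i hi => Finset.mem_range.2 (hsupp i hi)) _ (fun i _ => rfl)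
    rw [h1, Finset.sum_range_succ]
    have h2 : ∑ i ∈ Finset.range q, d i = q * (p - 1) := by
      rw [Finset.sum_congr rfl (fun i hi => by
        rw [hdapp, if_pos (Finset.mem_range.1 hi)])]
      simp [Finset.sum_const, Nat.smul_one_eq_cast]
    have h3 : d q = r := by
      rw [hdapp]
      simp
    rw [h2, h3, hq, hr, Nat.mul_comm]
    exact Nat.div_add_mod n (p - 1)
  set f : MvPolynomial ℕ (ZMod p) := monomial d (1 : ZMod p) with hf
  have hf0 : f ≠ 0 := by
    rw [hf, Ne, monomial_eq_zero]
    exact one_ne_zero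
  have hsuppf : f.support = {d} := by
    rw [hf, support_monomial, if_neg (one_ne_zero (α := ZMod p))]
  have hred : IsReducedPoly p f := by
    intro e he i
    rw [hsuppf, Finset.mem_singleton] at he
    subst he
    exact hdle i
  have hvars : ∀ i ∈ f.vars, i < q + 1 := by
    intro i hi
    rw [hf, vars_monomial (one_ne_zero (α := ZMod p))] at hi
    exact hsupp i hi
  have hdeg : ∀ e ∈ f.support, (e.sum fun _ x => x) ∈ M₁ := by
    intro e he
    rw [hsuppf, Finset.mem_singleton] at he
    subst he
    rw [hsum]
    exact hn
  have hmem : (⟨q, inducedOp p q f⟩ : Ops (ZMod p)) ∈ CM p M₁ :=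
    Or.inr ⟨q, f, hf0, hred, hvars, hdeg, rfl⟩
  have hval : inducedOp p q f (fun _ => 1) = 1 := by
    show eval (fun i : ℕ => if h : i < q + 1 then (1 : ZMod p) else 0) f = 1
    rw [hf, eval_monomial, one_mul]
    rw [Finsupp.prod]
    rw [Finset.prod_congr rfl (fun i hi => by
      rw [dif_pos (hsupp i hi), one_pow])]
    exact Finset.prod_const_one
  rcases h hmem with ⟨m, hm⟩ | ⟨m, g, hg0, hgred, hgvars, hgdeg, hmk⟩
  · rw [Sigma.mk.inj_iff] at hm
    obtain ⟨rfl, h2⟩ := hm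
    have h3 := eq_of_heq h2
    have h4 := congrFun h3 (fun _ => 1)
    rw [hval] at h4
    exact absurd h4.symm zero_ne_one
  · rw [Sigma.mk.inj_iff] at hmk
    obtain ⟨h1, h2⟩ := hmk
    subst h1
    have h3 := eq_of_heq h2
    have hfg : f = g := reduced_induced_inj p q hp f g hred hgred hvars hgvars h3
    have hd' : d ∈ g.support := by
      rw [← hfg, hsuppf]
      exact Finset.mem_singleton_self d
    have := hgdeg d hd'
    rwa [hsum] at this

/-- The map `𝒞` is injective on `p`-minor subsets. -/
theorem statement7 (p : ℕ) (hp : p.Prime) (M₁ M₂ : Set ℕ)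
    (h₁ : IsPMinor p M₁) (h₂ : IsPMinor p M₂) (h : CM p M₁ = CM p M₂) :
    M₁ = M₂ :=
  Set.Subset.antisymm (CM_subset_aux p hp M₁ M₂ (subset_of_eq h))
    (CM_subset_aux p hp M₂ M₁ (subset_of_eq h.symm))
end

section
/- Let p be a prime, let d ∈ ℕ, and let g ∈ Z_p[x_1,x_2,…] be a polynomial all of whose monomials have total degree at most d, and such that the monomial x_1x_2⋯x_d (with exponent vector (1,…,1) in the first d variables) does not occur in g. Then x_1x_2⋯x_d belongs to the polynomial linearly closed clonoid generated by {x_1x_2⋯x_d + g}. -/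
section AuxIdent
open MvPolynomial Finset

-- combinatorial lemma
lemma aux_pow_sum (V : Finset ℕ) :
    ∑ U ∈ V.powerset, (-1:ℤ)^(V.card - U.card) = if V = ∅ then 1 else 0 := by
  have h : ∀ U ∈ V.powerset, (-1:ℤ)^(V.card - U.card) = (-1)^V.card * (-1)^U.card := by
    intro U hU
    have hle : U.card ≤ V.card := Finset.card_le_card (Finset.mem_powerset.mp hU)
    obtain ⟨k, hk⟩ := Nat.exists_eq_add_of_le hle
    rw [hk, Nat.add_sub_cancel_left, pow_add]
    ring_nf
    simp [pow_mul]
    rcases Nat.even_or_odd U.card with h | h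
    · left; exact h.neg_one_pow
    · right; exact h.neg_one_pow
  rw [Finset.sum_congr rfl h, ← Finset.mul_sum, Finset.sum_powerset_neg_one_pow_card]
  split_ifs with hV
  · subst hV; simp
  · simp

lemma aux_between (D T : Finset ℕ) (hT : T ⊆ D) :
    ∑ S ∈ D.powerset.filter (fun S => T ⊆ S), (-1:ℤ)^(D.card - S.card)
      = if T = D then 1 else 0 := by
  have key : ∑ S ∈ D.powerset.filter (fun S => T ⊆ S), (-1:ℤ)^(D.card - S.card)
      = ∑ U ∈ (D \ T).powerset, (-1:ℤ)^((D \ T).card - U.card) := by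
    refine Finset.sum_nbij' (fun S => S \ T) (fun U => U ∪ T) ?_ ?_ ?_ ?_ ?_
    · intro S hS
      simp only [Finset.mem_filter, Finset.mem_powerset] at hS ⊢
      exact Finset.sdiff_subset_sdiff hS.1 (le_refl T)
    · intro U hU
      simp only [Finset.mem_powerset] at hU
      simp only [Finset.mem_filter, Finset.mem_powerset]
      constructor
      · exact Finset.union_subset (hU.trans (Finset.sdiff_subset)) hT
      · exact Finset.subset_union_right
    · intro S hS
      simp only [Finset.mem_filter, Finset.mem_powerset] at hS
      exact Finset.sdiff_union_of_subset hS.2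
    · intro U hU
      simp only [Finset.mem_powerset] at hU
      have : Disjoint U T := Finset.disjoint_of_subset_left hU Finset.sdiff_disjoint
      rw [Finset.union_sdiff_cancel_right this]
    · intro S hS
      simp only [Finset.mem_filter, Finset.mem_powerset] at hS
      congr 1
      rw [← Finset.card_sdiff_of_subset hS.1, ← Finset.card_sdiff_of_subset (Finset.sdiff_subset_sdiff hS.1 (le_refl T))]
      congr 1
      ext x
      simp only [Finset.mem_sdiff]
      constructor
      · rintro ⟨hxD, hxS⟩
        exact ⟨⟨hxD, fun hxT => hxS (hS.2 hxT)⟩, fun h => hxS h.1⟩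
      · rintro ⟨⟨hxD, hxT⟩, h⟩
        exact ⟨hxD, fun hxS => h ⟨hxS, hxT⟩⟩
  rw [key, aux_pow_sum]
  congr 1
  rw [Finset.sdiff_eq_empty_iff_subset]
  simp only [eq_iff_iff]
  exact ⟨fun h => Finset.Subset.antisymm hT h, fun h => h ▸ le_refl _⟩
open MvPolynomial Finset

section
variable (p d : ℕ)

noncomputable def m0 (d : ℕ) : ℕ →₀ ℕ := ∑ i ∈ Finset.range d, Finsupp.single i 1

lemma m0_apply (j : ℕ) : m0 d j = if j ∈ Finset.range d then 1 else 0 := by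
  rw [m0, Finset.sum_apply']
  simp [Finsupp.single_apply]

lemma m0_support : (m0 d).support = Finset.range d := by
  ext j
  rw [Finsupp.mem_support_iff, m0_apply]
  split_ifs with h <;> simp [h]

lemma m0_sum : ((m0 d).sum fun _ e => e) = d := by
  rw [Finsupp.sum, m0_support]
  have : ∀ j ∈ Finset.range d, m0 d j = 1 := by
    intro j hj; rw [m0_apply, if_pos hj]
  rw [Finset.sum_congr rfl this]
  simp

lemma prodX_eq : (∏ i ∈ Finset.range d, X i : MvPolynomial ℕ (ZMod p))
    = monomial (m0 d) 1 := by
  rw [monomial_eq, Finsupp.prod, m0_support, map_one, one_mul]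
  refine Finset.prod_congr rfl fun j hj => ?_
  rw [m0_apply, if_pos hj, pow_one]

end

section
variable (p : ℕ)

noncomputable def Pm (m : ℕ →₀ ℕ) : MvPolynomial ℕ (ZMod p) :=
  m.prod fun i e => (X i : MvPolynomial ℕ (ZMod p)) ^ e

lemma prod_gg (m : ℕ →₀ ℕ) (S : Finset ℕ) :
    (m.prod fun i e => (if i ∈ S then (X i : MvPolynomial ℕ (ZMod p)) else 0) ^ e)
      = if m.support ⊆ S then Pm p m else 0 := by
  split_ifs with h
  · rw [Pm, Finsupp.prod, Finsupp.prod]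
    exact Finset.prod_congr rfl fun i hi => by rw [if_pos (h hi)]
  · obtain ⟨i, hiS, hiN⟩ := Finset.not_subset.mp h
    refine Finset.prod_eq_zero hiS ?_
    simp only [if_neg hiN]
    exact zero_pow (Finsupp.mem_support_iff.mp hiS)

lemma step1 (f : MvPolynomial ℕ (ZMod p)) (S : Finset ℕ) :
    MvPolynomial.aeval (fun i => if i ∈ S then (X i : MvPolynomial ℕ (ZMod p)) else 0) f
      = ∑ m ∈ f.support, MvPolynomial.C (coeff m f) *
          (if m.support ⊆ S then Pm p m else 0) := by
  conv_lhs => rw [f.as_sum]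
  rw [map_sum]
  refine Finset.sum_congr rfl fun m _ => ?_
  rw [aeval_monomial, prod_gg]
  rfl

lemma scalar_eq (d : ℕ) (T : Finset ℕ) :
    (∑ S ∈ (Finset.range d).powerset.filter (fun S => T ⊆ S),
        ((-1 : ZMod p)) ^ (d - S.card))
      = if T = Finset.range d then 1 else 0 := by
  by_cases hT : T ⊆ Finset.range d
  · have h := aux_between (Finset.range d) T hT
    rw [Finset.card_range] at h
    have : (∑ S ∈ (Finset.range d).powerset.filter (fun S => T ⊆ S),
        ((-1 : ZMod p)) ^ (d - S.card))
        = ((∑ S ∈ (Finset.range d).powerset.filter (fun S => T ⊆ S),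
        ((-1 : ℤ)) ^ (d - S.card) : ℤ) : ZMod p) := by
      push_cast
      rfl
    rw [this, h]
    split_ifs <;> simp
  · have hfe : (Finset.range d).powerset.filter (fun S => T ⊆ S) = ∅ := by
      refine Finset.filter_eq_empty_iff.mpr fun S hS hTS => ?_
      exact hT (hTS.trans (Finset.mem_powerset.mp hS))
    rw [hfe, Finset.sum_empty, if_neg]
    rintro rfl
    exact hT le_rfl

end

lemma Pm_m0 (p d : ℕ) : Pm p (m0 d) = ∏ i ∈ Finset.range d, X i := by
  rw [Pm, Finsupp.prod, m0_support]
  refine Finset.prod_congr rfl fun j hj => ?_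
  rw [m0_apply, if_pos hj, pow_one]

lemma main_identity (p : ℕ) (hp : p.Prime) (d : ℕ)
    (g : MvPolynomial ℕ (ZMod p))
    (hdeg : ∀ m ∈ g.support, (m.sum fun _ e => e) ≤ d)
    (hnot : MvPolynomial.coeff (m0 d) g = 0) :
    ∑ S ∈ (Finset.range d).powerset,
        MvPolynomial.C ((-1 : ZMod p) ^ (d - S.card)) *
          MvPolynomial.aeval (fun i => if i ∈ S then (X i : MvPolynomial ℕ (ZMod p)) else 0)
            ((∏ i ∈ Finset.range d, X i) + g)
      = ∏ i ∈ Finset.range d, X i := by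
  haveI : Fact p.Prime := ⟨hp⟩
  set f := (∏ i ∈ Finset.range d, X i : MvPolynomial ℕ (ZMod p)) + g with hf
  have hcoeff : coeff (m0 d) f = 1 := by
    rw [hf, coeff_add, prodX_eq, coeff_monomial, if_pos rfl, hnot, add_zero]
  have hdegf : ∀ m ∈ f.support, (m.sum fun _ e => e) ≤ d := by
    intro m hm
    rcases Finset.mem_union.mp (MvPolynomial.support_add hm) with h | h
    · rw [prodX_eq, support_monomial, if_neg one_ne_zero] at h
      rw [Finset.mem_singleton.mp h, m0_sum]
    · exact hdeg m h
  have huniq : ∀ m ∈ f.support, m.support = Finset.range d → m = m0 d := by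
    intro m hm hsup
    have h1 : ∀ i ∈ Finset.range d, 1 ≤ m i := fun i hi =>
      Nat.one_le_iff_ne_zero.mpr (Finsupp.mem_support_iff.mp (hsup ▸ hi))
    have hsum : ∑ i ∈ Finset.range d, m i ≤ d := by
      have := hdegf m hm
      rwa [Finsupp.sum, hsup] at this
    have heq : ∑ i ∈ Finset.range d, (1 : ℕ) = ∑ i ∈ Finset.range d, m i := by
      have hge : ∑ i ∈ Finset.range d, (1 : ℕ) ≤ ∑ i ∈ Finset.range d, m i :=
        Finset.sum_le_sum h1
      have : ∑ i ∈ Finset.range d, (1 : ℕ) = d := by simp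
      omega
    have hall := (Finset.sum_eq_sum_iff_of_le h1).mp heq
    ext j
    rw [m0_apply]
    by_cases hj : j ∈ Finset.range d
    · rw [if_pos hj, ← hall j hj]
    · rw [if_neg hj]
      exact Finsupp.notMem_support_iff.mp (fun hx => hj (hsup ▸ hx))
  have hm0mem : m0 d ∈ f.support := mem_support_iff.mpr (by rw [hcoeff]; exact one_ne_zero)
  have e1 : ∀ S ∈ (Finset.range d).powerset,
      MvPolynomial.C ((-1 : ZMod p) ^ (d - S.card)) *
        MvPolynomial.aeval (fun i => if i ∈ S then (X i : MvPolynomial ℕ (ZMod p)) else 0) f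
      = ∑ m ∈ f.support, (if m.support ⊆ S then
          MvPolynomial.C ((-1 : ZMod p) ^ (d - S.card)) * (MvPolynomial.C (coeff m f) * Pm p m)
        else 0) := by
    intro S _
    rw [step1 p f S, Finset.mul_sum]
    refine Finset.sum_congr rfl fun m _ => ?_
    split_ifs <;> simp [mul_assoc]
  have e2 : ∀ m ∈ f.support,
      (∑ S ∈ (Finset.range d).powerset, if m.support ⊆ S then
          MvPolynomial.C ((-1 : ZMod p) ^ (d - S.card)) * (MvPolynomial.C (coeff m f) * Pm p m)
        else 0)
      = if m.support = Finset.range d then MvPolynomial.C (coeff m f) * Pm p m else 0 := by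
    intro m _
    rw [← Finset.sum_filter, ← Finset.sum_mul, ← map_sum, scalar_eq]
    split_ifs <;> simp
  have e3 : f.support.filter (fun m => m.support = Finset.range d) = {m0 d} := by
    ext m
    rw [Finset.mem_filter, Finset.mem_singleton]
    constructor
    · rintro ⟨hm, hsup⟩; exact huniq m hm hsup
    · rintro rfl; exact ⟨hm0mem, m0_support d⟩
  calc ∑ S ∈ (Finset.range d).powerset,
        MvPolynomial.C ((-1 : ZMod p) ^ (d - S.card)) *
          MvPolynomial.aeval (fun i => if i ∈ S then (X i : MvPolynomial ℕ (ZMod p)) else 0) f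
      = ∑ S ∈ (Finset.range d).powerset, ∑ m ∈ f.support, (if m.support ⊆ S then
          MvPolynomial.C ((-1 : ZMod p) ^ (d - S.card)) * (MvPolynomial.C (coeff m f) * Pm p m)
        else 0) := Finset.sum_congr rfl e1
    _ = ∑ m ∈ f.support, ∑ S ∈ (Finset.range d).powerset, (if m.support ⊆ S then
          MvPolynomial.C ((-1 : ZMod p) ^ (d - S.card)) * (MvPolynomial.C (coeff m f) * Pm p m)
        else 0) := Finset.sum_comm
    _ = ∑ m ∈ f.support, (if m.support = Finset.range d then
          MvPolynomial.C (coeff m f) * Pm p m else 0) := Finset.sum_congr rfl e2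
    _ = ∑ m ∈ f.support.filter (fun m => m.support = Finset.range d),
          MvPolynomial.C (coeff m f) * Pm p m := (Finset.sum_filter _ _).symm
    _ = MvPolynomial.C (coeff (m0 d) f) * Pm p (m0 d) := by rw [e3, Finset.sum_singleton]
    _ = ∏ i ∈ Finset.range d, X i := by rw [hcoeff, map_one, one_mul, Pm_m0]

end AuxIdent

section AuxClos
open MvPolynomial Finset

variable {p : ℕ} (hp : p.Prime) {K : Set (MvPolynomial ℕ (ZMod p))}

lemma linpoly_zero : (0 : MvPolynomial ℕ (ZMod p)) ∈ LinPoly p :=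
  ⟨∅, fun _ => 0, by simp⟩

lemma linpoly_X (i : ℕ) : (X i : MvPolynomial ℕ (ZMod p)) ∈ LinPoly p :=
  ⟨{i}, fun _ => 1, by simp⟩

lemma memC_zero (hC : IsPLC p K) : (0 : MvPolynomial ℕ (ZMod p)) ∈ K := by
  apply hC.2.1
  exact ⟨0, 0, fun _ => 0, linpoly_zero, by simp, by omega, by simp⟩

include hp in
lemma memC_add (hC : IsPLC p K) {f g : MvPolynomial ℕ (ZMod p)}
    (hf : f ∈ K) (hg : g ∈ K) : f + g ∈ K := by
  haveI : Fact p.Prime := ⟨hp⟩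
  apply hC.2.1
  refine ⟨2, X 0 + X 1, fun i => if i = 0 then f else g,
    ⟨{0, 1}, fun _ => 1, by simp⟩, ?_, ?_, ?_⟩
  · intro i hi
    have := MvPolynomial.vars_add_subset (X 0 : MvPolynomial ℕ (ZMod p)) (X 1) hi
    rw [MvPolynomial.vars_X, MvPolynomial.vars_X, Finset.mem_union, Finset.mem_singleton, Finset.mem_singleton] at this
    omega
  · intro i _
    by_cases h : i = 0 <;> simp [h, hf, hg]
  · simp

include hp in
lemma memC_smul (hC : IsPLC p K) {f : MvPolynomial ℕ (ZMod p)} (c : ZMod p)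
    (hf : f ∈ K) : C c * f ∈ K := by
  haveI : Fact p.Prime := ⟨hp⟩
  apply hC.2.1
  refine ⟨1, MvPolynomial.C c * X 0, fun _ => f, ⟨{0}, fun _ => c, by simp⟩, ?_, ?_, ?_⟩
  · intro i hi
    have := MvPolynomial.vars_mul (MvPolynomial.C c) (X 0 : MvPolynomial ℕ (ZMod p)) hi
    rw [Finset.mem_union, MvPolynomial.vars_X, MvPolynomial.vars_C] at this
    simp at this
    omega
  · intro i _; exact hf
  · simp

lemma memC_comp (hC : IsPLC p K) {f : MvPolynomial ℕ (ZMod p)} (hf : f ∈ K)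
    (S : Finset ℕ) :
    MvPolynomial.aeval (fun i => if i ∈ S then X i else 0) f ∈ K := by
  apply hC.2.2
  refine ⟨f.vars.sup id + 1, f, fun i => if i ∈ S then X i else 0, hf, ?_, ?_, rfl⟩
  · intro i hi
    have : i ≤ f.vars.sup id := Finset.le_sup (f := id) hi
    omega
  · intro i _
    by_cases h : i ∈ S <;> simp [h, linpoly_X, linpoly_zero]

end AuxClos

/-- Let `d ≥ 1` and let `g` be a polynomial all of whose monomials have
total degree at most `d` such that the monomial `x₀x₁⋯x_{d-1}` does not occur in `g`.
Then `x₀x₁⋯x_{d-1}` belongs to the polynomial linearly closed clonoid generated by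
`{x₀x₁⋯x_{d-1} + g}`. -/
theorem statement9 (p : ℕ) (hp : p.Prime) (d : ℕ) (hd : 0 < d)
    (g : MvPolynomial ℕ (ZMod p))
    (hdeg : ∀ m ∈ g.support, (m.sum fun _ e => e) ≤ d)
    (hnot : MvPolynomial.coeff (∑ i ∈ Finset.range d, Finsupp.single i 1) g = 0) :
    (∏ i ∈ Finset.range d, MvPolynomial.X i) ∈
      genPLC p {(∏ i ∈ Finset.range d, MvPolynomial.X i : MvPolynomial ℕ (ZMod p)) + g} := by
  classical
  refine Set.mem_sInter.mpr ?_
  rintro K ⟨hK, hfK⟩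
  have hfmem : ((∏ i ∈ Finset.range d, MvPolynomial.X i : MvPolynomial ℕ (ZMod p)) + g) ∈ K :=
    hfK rfl
  have hid := main_identity p hp d g hdeg hnot
  rw [← hid]
  refine Finset.sum_induction _ (fun x => x ∈ K)
    (fun a b ha hb => memC_add hp hK ha hb) (memC_zero hK) ?_
  intro S _
  exact memC_smul hp hK _ (memC_comp hK hfmem S)
end

section
/- Let p be a prime and let f be a nonzero reduced polynomial over Z_p with d the maximum of the total degrees of the monomials of f. If d = 0, then the constant polynomial 1 belongs to the polynomial linearly closed clonoid generated by {f}; if d > 0, then the monomial x_1x_2⋯x_d belongs to the polynomial linearly closed clonoid generated by {f}. -/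
namespace S10
open MvPolynomial Finset

variable {R : Type*} [CommRing R]

/-- weight of monomials of a product -/
lemma wt_mul (w : (ℕ →₀ ℕ) →+ ℕ) {q r : MvPolynomial ℕ R} {a b : ℕ}
    (hq : ∀ μ ∈ q.support, w μ = a) (hr : ∀ μ ∈ r.support, w μ = b) :
    ∀ μ ∈ (q * r).support, w μ = a + b := by
  intro μ hμ
  have h := MvPolynomial.support_mul q r hμ
  rw [Finset.mem_add] at h
  obtain ⟨x, hx, y, hy, hxy⟩ := h
  rw [← hxy, map_add, hq x hx, hr y hy]

lemma wt_pow (w : (ℕ →₀ ℕ) →+ ℕ) {q : MvPolynomial ℕ R} {a : ℕ}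
    (hq : ∀ μ ∈ q.support, w μ = a) (e : ℕ) :
    ∀ μ ∈ (q ^ e).support, w μ = e * a := by
  induction e with
  | zero =>
    intro μ hμ
    rw [pow_zero] at hμ
    rw [MvPolynomial.mem_support_iff, MvPolynomial.coeff_one] at hμ
    have : (0 : ℕ →₀ ℕ) = μ := by by_contra h; simp [h] at hμ
    rw [← this]; simp
  | succ n ih =>
    intro μ hμ
    rw [pow_succ] at hμ
    have := wt_mul w ih hq μ hμ
    rw [this]; ring

lemma wt_prod (w : (ℕ →₀ ℕ) →+ ℕ) {ι : Type*} (s : Finset ι)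
    (q : ι → MvPolynomial ℕ R) (a : ι → ℕ)
    (h : ∀ i ∈ s, ∀ μ ∈ (q i).support, w μ = a i) :
    ∀ μ ∈ (∏ i ∈ s, q i).support, w μ = ∑ i ∈ s, a i := by
  classical
  induction s using Finset.induction with
  | empty =>
    intro μ hμ
    rw [Finset.prod_empty] at hμ
    rw [MvPolynomial.mem_support_iff, MvPolynomial.coeff_one] at hμ
    have : (0 : ℕ →₀ ℕ) = μ := by by_contra hh; simp [hh] at hμ
    rw [← this]; simp
  | insert x s' ha ih =>
    intro μ hμ
    rw [Finset.prod_insert ha] at hμ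
    rw [Finset.sum_insert ha]
    exact wt_mul w (h x (Finset.mem_insert_self x s'))
      (ih fun i hi => h i (Finset.mem_insert_of_mem hi)) μ hμ

lemma supp_sumX [Nontrivial R] {b : Finset ℕ} :
    ∀ μ ∈ (∑ k ∈ b, (X k : MvPolynomial ℕ R)).support,
      ∃ k ∈ b, μ = Finsupp.single k 1 := by
  intro μ hμ
  have h := MvPolynomial.support_sum hμ
  rw [Finset.mem_biUnion] at h
  obtain ⟨k, hk, hμk⟩ := h
  rw [MvPolynomial.support_X] at hμk
  exact ⟨k, hk, (Finset.mem_singleton.mp hμk)⟩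

lemma wt_sumX [Nontrivial R] (w : (ℕ →₀ ℕ) →+ ℕ) {b : Finset ℕ} {c : ℕ}
    (h : ∀ k ∈ b, w (Finsupp.single k 1) = c) :
    ∀ μ ∈ (∑ k ∈ b, (X k : MvPolynomial ℕ R)).support, w μ = c := by
  intro μ hμ
  obtain ⟨k, hk, rfl⟩ := supp_sumX μ hμ
  exact h k hk

/-- coefficient of a product with variable-disjoint supports -/
lemma coeff_mul_disjoint (V : ℕ → Prop) {q r : MvPolynomial ℕ R} {μ ν : ℕ →₀ ℕ}
    (hq : ∀ a ∈ q.support, ∀ k, ¬ V k → a k = 0)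
    (hr : ∀ b ∈ r.support, ∀ k, V k → b k = 0)
    (hμ : ∀ k, ¬ V k → μ k = 0) (hν : ∀ k, V k → ν k = 0) :
    MvPolynomial.coeff (μ + ν) (q * r) = MvPolynomial.coeff μ q * MvPolynomial.coeff ν r := by
  classical
  rw [MvPolynomial.coeff_mul]
  apply Finset.sum_eq_single_of_mem (μ, ν)
  · rw [Finset.HasAntidiagonal.mem_antidiagonal]
  · rintro ⟨a, b⟩ hab hne
    rw [Finset.HasAntidiagonal.mem_antidiagonal] at hab
    by_contra hc
    have ha : a ∈ q.support := by
      rw [MvPolynomial.mem_support_iff]; intro h; apply hc; simp [h]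
    have hb : b ∈ r.support := by
      rw [MvPolynomial.mem_support_iff]; intro h; apply hc; simp [h]
    apply hne
    have key : a = μ ∧ b = ν := by
      constructor <;> (ext k; by_cases hV : V k)
      · have h1 : b k = 0 := hr b hb k hV
        have h2 : ν k = 0 := hν k hV
        have := DFunLike.congr_fun hab k
        simp only [Finsupp.add_apply, h1, h2, add_zero] at this
        exact this
      · rw [hq a ha k hV, hμ k hV]
      · rw [hr b hb k hV, hν k hV]
      · have h1 : a k = 0 := hq a ha k hV
        have h2 : μ k = 0 := hμ k hV
        have := DFunLike.congr_fun hab k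
        simp only [Finsupp.add_apply, h1, h2, zero_add] at this
        exact this
    rw [key.1, key.2]

variable {R : Type*} [CommRing R]

lemma single_sum_apply (b : Finset ℕ) (v : ℕ) :
    (∑ k ∈ b, Finsupp.single k 1 : ℕ →₀ ℕ) v = if v ∈ b then 1 else 0 := by
  classical
  rw [Finset.sum_apply']
  simp only [Finsupp.single_apply]
  rw [Finset.sum_ite_eq' b v (fun _ => 1)]

lemma single_sum_support (b : Finset ℕ) :
    (∑ k ∈ b, Finsupp.single k 1 : ℕ →₀ ℕ).support = b := by
  ext v
  rw [Finsupp.mem_support_iff, single_sum_apply]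
  by_cases h : v ∈ b <;> simp [h]

/-- coefficient of the all-ones monomial in `(∑ X k)^card` is `card!` -/
lemma fact_coeff [Nontrivial R] (s : Finset ℕ) :
    MvPolynomial.coeff (∑ k ∈ s, Finsupp.single k 1)
      ((∑ k ∈ s, (X k : MvPolynomial ℕ R)) ^ s.card) = (s.card.factorial : R) := by
  classical
  induction s using Finset.induction with
  | empty => simp [MvPolynomial.coeff_one]
  | insert a s' ha ih =>
    rw [Finset.sum_insert ha, Finset.sum_insert ha, Finset.card_insert_of_notMem ha]
    set T : MvPolynomial ℕ R := ∑ k ∈ s', X k with hT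
    set n := s'.card with hn
    rw [add_pow]
    rw [MvPolynomial.coeff_sum]
    have key : ∀ j ∈ Finset.range (n + 1 + 1),
        MvPolynomial.coeff (Finsupp.single a 1 + ∑ k ∈ s', Finsupp.single k 1)
          (X a ^ j * T ^ (n + 1 - j) * ((n + 1).choose j : MvPolynomial ℕ R)) =
        if j = 1 then (n.factorial : R) * (n + 1) else 0 := by
      intro j _
      have hcast : ((n + 1).choose j : MvPolynomial ℕ R) = C (((n + 1).choose j : R)) :=
        (map_natCast (C : R →+* MvPolynomial ℕ R) _).symm
      rw [hcast, mul_comm _ (C (((n + 1).choose j : R))), MvPolynomial.coeff_C_mul]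
      have hTa : ∀ b ∈ (T ^ (n + 1 - j)).support, b a = 0 := by
        intro b hb
        have := wt_pow (Finsupp.applyAddHom a)
          (wt_sumX (Finsupp.applyAddHom a) (c := 0) (fun k hk => by
            have hne : k ≠ a := fun h => ha (h ▸ hk)
            simp [Finsupp.single_apply, hne])) (n + 1 - j) b hb
        simpa using this
      have hTk : ∀ b ∈ (T ^ (n + 1 - j)).support, ∀ k, (k = a) → b k = 0 :=
        fun b hb k hk => hk ▸ hTa b hb
      have hsplit := coeff_mul_disjoint (fun k => k = a)
        (q := X a ^ j) (r := T ^ (n + 1 - j))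
        (μ := Finsupp.single a 1) (ν := ∑ k ∈ s', Finsupp.single k 1)
        (fun b hb k hk => by
          rw [MvPolynomial.mem_support_iff, MvPolynomial.coeff_X_pow] at hb
          have : Finsupp.single a j = b := by by_contra h; simp [h] at hb
          rw [← this, Finsupp.single_apply]
          simp [Ne.symm hk])
        hTk
        (fun k hk => by rw [Finsupp.single_apply]; simp [Ne.symm hk])
        (fun k hk => by subst hk; rw [single_sum_apply]; simp [ha])
      rw [hsplit, MvPolynomial.coeff_X_pow]
      by_cases hj : j = 1
      · subst hj
        simp only [Nat.add_sub_cancel, if_true]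
        rw [ih, Nat.choose_one_right]
        push_cast
        ring
      · have : ¬ (Finsupp.single a j = Finsupp.single a 1) := by
          intro h
          apply hj
          have := DFunLike.congr_fun h a
          simpa using this
        rw [if_neg this, if_neg hj]
        simp
    rw [Finset.sum_congr rfl key]
    rw [Finset.sum_ite_eq' (Finset.range (n + 1 + 1)) 1 (fun _ => (n.factorial : R) * (n + 1))]
    rw [if_pos (by simp : (1:ℕ) ∈ Finset.range (n + 1 + 1))]
    rw [Nat.factorial_succ]
    push_cast
    ring

/-- alternating sum over powerset -/
lemma sign_sum (s : Finset ℕ) :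
    (∑ S ∈ s.powerset, (-1 : R) ^ S.card) = if s = ∅ then 1 else 0 := by
  have h := Finset.sum_powerset_neg_one_pow_card (x := s)
  have h2 := congrArg (fun z : ℤ => (z : R)) h
  simp only [Int.cast_sum, Int.cast_pow, Int.cast_neg, Int.cast_one, Int.cast_ite,
    Int.cast_zero] at h2
  exact h2
lemma coeff_prod_disjoint {ι : Type*} [DecidableEq ι] (V : ι → Finset ℕ)
    (s : Finset ι) (hdisj : ∀ i ∈ s, ∀ j ∈ s, i ≠ j → ∀ k, k ∈ V i → k ∉ V j)
    (q : ι → MvPolynomial ℕ R) (μ : ι → (ℕ →₀ ℕ))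
    (hq : ∀ i ∈ s, ∀ ν ∈ (q i).support, ∀ k, k ∉ V i → ν k = 0)
    (hμ : ∀ i ∈ s, ∀ k, k ∉ V i → μ i k = 0) :
    MvPolynomial.coeff (∑ i ∈ s, μ i) (∏ i ∈ s, q i) =
      ∏ i ∈ s, MvPolynomial.coeff (μ i) (q i) := by
  classical
  induction s using Finset.induction with
  | empty => simp [MvPolynomial.coeff_one]
  | insert a s' ha ih =>
    rw [Finset.sum_insert ha, Finset.prod_insert ha, Finset.prod_insert ha]
    have hrest : ∀ ν ∈ (∏ i ∈ s', q i).support, ∀ k, k ∈ V a → ν k = 0 := by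
      intro ν hν k hk
      have := wt_prod (Finsupp.applyAddHom k) s' q (fun _ => 0)
        (fun i hi ν' hν' => by
          have hki : k ∉ V i := hdisj a (Finset.mem_insert_self a s') i
            (Finset.mem_insert_of_mem hi) (fun h => ha (h ▸ hi)) k hk
          simpa using hq i (Finset.mem_insert_of_mem hi) ν' hν' k hki) ν hν
      simpa using this
    rw [coeff_mul_disjoint (fun k => k ∈ V a)
      (hq a (Finset.mem_insert_self a s'))
      hrest
      (hμ a (Finset.mem_insert_self a s'))
      (fun k hk => by
        rw [Finset.sum_apply']
        apply Finset.sum_eq_zero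
        intro i hi
        exact hμ i (Finset.mem_insert_of_mem hi) k
          (hdisj a (Finset.mem_insert_self a s') i (Finset.mem_insert_of_mem hi)
            (fun h => ha (h ▸ hi)) k hk))]
    rw [ih (fun i hi j hj hij => hdisj i (Finset.mem_insert_of_mem hi) j
        (Finset.mem_insert_of_mem hj) hij)
      (fun i hi => hq i (Finset.mem_insert_of_mem hi))
      (fun i hi => hμ i (Finset.mem_insert_of_mem hi))]
section Closure
variable {p : ℕ} [Fact p.Prime]

lemma lin_mem (s : Finset ℕ) (a : ℕ → ZMod p) :
    (∑ i ∈ s, (MvPolynomial.C (a i) * MvPolynomial.X i : MvPolynomial ℕ (ZMod p))) ∈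
      LinPoly p := ⟨s, a, rfl⟩

lemma zero_lin_mem : (0 : MvPolynomial ℕ (ZMod p)) ∈ LinPoly p :=
  ⟨∅, fun _ => 0, by simp⟩

lemma sumX_lin_mem (b : Finset ℕ) :
    (∑ k ∈ b, (MvPolynomial.X k : MvPolynomial ℕ (ZMod p))) ∈ LinPoly p := by
  refine ⟨b, fun _ => 1, ?_⟩
  apply Finset.sum_congr rfl
  intro k _
  rw [map_one, one_mul]

lemma vars_lin (s : Finset ℕ) (a : ℕ → ZMod p) :
    (∑ i ∈ s, (MvPolynomial.C (a i) * MvPolynomial.X i : MvPolynomial ℕ (ZMod p))).vars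
      ⊆ s := by
  classical
  intro v hv
  have h := MvPolynomial.vars_sum_subset
    (t := s) (φ := fun i => (MvPolynomial.C (a i) * MvPolynomial.X i : MvPolynomial ℕ (ZMod p))) hv
  rw [Finset.mem_biUnion] at h
  obtain ⟨i, hi, hvi⟩ := h
  have h2 := MvPolynomial.vars_mul _ _ hvi
  rw [Finset.mem_union] at h2
  rcases h2 with h2 | h2
  · exact absurd h2 (by simp [MvPolynomial.vars_C])
  · rw [MvPolynomial.vars_X, Finset.mem_singleton] at h2
    exact h2 ▸ hi

/-- linear-combination closure of a PLC -/
lemma mem_comb {C : Set (MvPolynomial ℕ (ZMod p))} (hC : IsPLC p C)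
    (s : Finset ℕ) (a : ℕ → ZMod p) (g : ℕ → MvPolynomial ℕ (ZMod p))
    (hg : ∀ i ∈ s, g i ∈ C) :
    (∑ i ∈ s, MvPolynomial.C (a i) * g i) ∈ C := by
  classical
  obtain ⟨w, hw⟩ := hC.1
  set g' : ℕ → MvPolynomial ℕ (ZMod p) := fun i => if i ∈ s then g i else w with hg'
  set n := (s.sup id) + 1 with hn
  apply hC.2.1
  refine ⟨n, ∑ i ∈ s, MvPolynomial.C (a i) * MvPolynomial.X i, g', lin_mem s a, ?_, ?_, ?_⟩
  · intro i hi
    have h1 := vars_lin s a hi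
    have h2 := Finset.le_sup (f := id) h1
    simp only [id_eq] at h2
    omega
  · intro i _
    by_cases h : i ∈ s <;> simp only [hg', h, if_true, if_false]
    · exact hg i h
    · exact hw
  · rw [map_sum]
    apply Finset.sum_congr rfl
    intro i hi
    rw [map_mul, MvPolynomial.aeval_C, MvPolynomial.aeval_X]
    simp only [hg', if_pos hi]
    rfl

lemma mem_zero {C : Set (MvPolynomial ℕ (ZMod p))} (hC : IsPLC p C) :
    (0 : MvPolynomial ℕ (ZMod p)) ∈ C := by
  have := mem_comb hC ∅ (fun _ => 0) (fun _ => 0) (by simp)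
  simpa using this

lemma mem_smul {C : Set (MvPolynomial ℕ (ZMod p))} (hC : IsPLC p C)
    {q : MvPolynomial ℕ (ZMod p)} (hq : q ∈ C) (c : ZMod p) : c • q ∈ C := by
  have := mem_comb hC {0} (fun _ => c) (fun _ => q) (by simp [hq])
  simpa [MvPolynomial.smul_eq_C_mul] using this

lemma mem_add {C : Set (MvPolynomial ℕ (ZMod p))} (hC : IsPLC p C)
    {q r : MvPolynomial ℕ (ZMod p)} (hq : q ∈ C) (hr : r ∈ C) : q + r ∈ C := by
  have := mem_comb hC {0, 1} (fun _ => 1) (fun i => if i = 0 then q else r)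
    (by intro i hi; rcases Finset.mem_insert.mp hi with h | h
        · simp [h, hq]
        · simp [Finset.mem_singleton.mp h, hr])
  simpa using this

lemma mem_subst {C : Set (MvPolynomial ℕ (ZMod p))} (hC : IsPLC p C)
    {q : MvPolynomial ℕ (ZMod p)} (hq : q ∈ C) (g : ℕ → MvPolynomial ℕ (ZMod p))
    (hg : ∀ i, g i ∈ LinPoly p) : MvPolynomial.aeval g q ∈ C := by
  apply hC.2.2
  refine ⟨(q.vars.sup id) + 1, q, g, hq, ?_, fun i _ => hg i, rfl⟩
  intro i hi
  have h2 := Finset.le_sup (f := id) hi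
  simp only [id_eq] at h2
  omega

lemma X_lin_mem (j : ℕ) : (MvPolynomial.X j : MvPolynomial ℕ (ZMod p)) ∈ LinPoly p := by
  have := sumX_lin_mem (p := p) {j}
  simpa using this

end Closure


section Main

variable {p : ℕ}

/-- degree as an additive hom -/
def degHom : (ℕ →₀ ℕ) →+ ℕ where
  toFun := fun μ => μ.sum fun _ e => e
  map_zero' := by simp
  map_add' := fun a b => by
    show (a + b).sum (fun _ e => e) = a.sum (fun _ e => e) + b.sum (fun _ e => e)
    exact Finsupp.sum_add_index (fun _ _ => rfl) (fun _ _ _ _ => rfl)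

lemma degHom_apply (μ : ℕ →₀ ℕ) : degHom μ = μ.sum fun _ e => e := rfl

lemma suppC (c : ZMod p) : ∀ μ ∈ (MvPolynomial.C c : MvPolynomial ℕ (ZMod p)).support, μ = 0 := by
  intro μ hμ
  rw [MvPolynomial.mem_support_iff, MvPolynomial.coeff_C] at hμ
  by_contra h
  rw [if_neg (fun hh => h hh.symm)] at hμ
  exact hμ rfl

end Main

end S10

open S10 in
/-- Let `f` be a nonzero reduced polynomial over `ZMod p` and `d` the
maximum of the total degrees of its monomials. If `d = 0`, then `1` belongs to the
polynomial linearly closed clonoid generated by `{f}`; if `d > 0`, then the monomial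
`x₀x₁⋯x_{d-1}` belongs to it. -/
theorem statement10 (p : ℕ) (hp : p.Prime) (f : MvPolynomial ℕ (ZMod p))
    (hf0 : f ≠ 0) (hred : IsReducedPoly p f) :
    (f.totalDegree = 0 → (1 : MvPolynomial ℕ (ZMod p)) ∈ genPLC p {f}) ∧
    (0 < f.totalDegree →
      (∏ i ∈ Finset.range f.totalDegree, MvPolynomial.X i) ∈ genPLC p {f}) := by
  classical
  haveI hfact : Fact p.Prime := ⟨hp⟩
  constructor
  · -- degree 0 case
    intro hd0
    intro C hC
    simp only [Set.mem_setOf_eq] at hC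
    obtain ⟨hPLC, hfC⟩ := hC
    have hf : f ∈ C := hfC rfl
    rw [MvPolynomial.totalDegree_eq_zero_iff] at hd0
    have hsupp : f.support = {0} := by
      have hne := MvPolynomial.support_nonempty.mpr hf0
      apply Finset.eq_singleton_iff_nonempty_unique_mem.mpr
      refine ⟨hne, fun μ hμ => ?_⟩
      ext k
      exact hd0 μ hμ k
    set c0 : ZMod p := MvPolynomial.coeff 0 f with hc0def
    have hfC0 : f = MvPolynomial.C c0 := by
      conv_lhs => rw [f.as_sum]
      rw [hsupp, Finset.sum_singleton, MvPolynomial.monomial_zero']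
    have hc0 : c0 ≠ 0 := by
      intro h
      apply hf0
      rw [hfC0, h, map_zero]
    have hmem := mem_smul hPLC hf c0⁻¹
    have heq : c0⁻¹ • f = 1 := by
      rw [hfC0, MvPolynomial.smul_eq_C_mul, ← map_mul, inv_mul_cancel₀ hc0, map_one]
    rwa [heq] at hmem
  · -- positive degree case
    intro hdpos
    set d := f.totalDegree with hdd
    obtain ⟨m, hm, hmd⟩ := Finset.exists_mem_eq_sup f.support
      (MvPolynomial.support_nonempty.mpr hf0) (fun μ : ℕ →₀ ℕ => μ.sum fun _ e => e)
    have hmd : d = m.sum fun _ e => e := hmd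
    -- blocks of fresh variables
    set block : ℕ → Finset ℕ := fun i => (Finset.range (m i)).image (fun j => Nat.pair i j)
      with hblock
    have hblockmem : ∀ i k, k ∈ block i ↔ ∃ j < m i, Nat.pair i j = k := by
      intro i k
      simp [hblock, Finset.mem_image]
    have hblockcard : ∀ i, (block i).card = m i := by
      intro i
      rw [hblock]
      rw [Finset.card_image_of_injective _ (fun a b h => (Nat.pair_eq_pair.mp h).2)]
      exact Finset.card_range (m i)
    have hdisjb : ∀ i i' k, k ∈ block i → k ∈ block i' → i = i' := by
      intro i i' k hk hk'
      obtain ⟨j, _, hj⟩ := (hblockmem i k).mp hk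
      obtain ⟨j', _, hj'⟩ := (hblockmem i' k).mp hk'
      have := hj.trans hj'.symm
      exact (Nat.pair_eq_pair.mp this).1
    have hblock0 : ∀ i, i ∉ m.support → block i = ∅ := by
      intro i hi
      rw [Finsupp.notMem_support_iff] at hi
      rw [hblock]
      simp [hi]
    set U : Finset ℕ := m.support.biUnion block with hU
    have hdisjU : ∀ x ∈ m.support, ∀ y ∈ m.support, x ≠ y → Disjoint (block x) (block y) := by
      intro x _ y _ hxy
      rw [Finset.disjoint_left]
      intro k hk hk'
      exact hxy (hdisjb x y k hk hk')
    have hUcard : U.card = d := by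
      rw [hU, Finset.card_biUnion hdisjU]
      rw [hmd]
      apply Finset.sum_congr rfl
      intro i _
      exact hblockcard i
    set σfull : ℕ → MvPolynomial ℕ (ZMod p) := fun i => ∑ k ∈ block i, MvPolynomial.X k
      with hσfull
    set G : MvPolynomial ℕ (ZMod p) := MvPolynomial.aeval σfull f with hG
    set ones : ℕ →₀ ℕ := ∑ v ∈ U, Finsupp.single v 1 with hones
    set term : (ℕ →₀ ℕ) → MvPolynomial ℕ (ZMod p) :=
      fun m' => MvPolynomial.C (MvPolynomial.coeff m' f) *
        ∏ i ∈ m'.support, σfull i ^ m' i with hterm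
    have hGform : G = ∑ m' ∈ f.support, term m' := by
      rw [hG]
      conv_lhs => rw [f.as_sum]
      rw [map_sum]
      apply Finset.sum_congr rfl
      intro m' _
      rw [MvPolynomial.aeval_monomial, MvPolynomial.algebraMap_eq]
      rfl
    -- weights of monomials of σfull i
    have hwσ : ∀ (w : (ℕ →₀ ℕ) →+ ℕ) (i : ℕ) (c : ℕ),
        (∀ k ∈ block i, w (Finsupp.single k 1) = c) →
        ∀ μ ∈ (σfull i).support, w μ = c := by
      intro w i c h
      exact wt_sumX w h
    -- all monomials of terms have support inside U
    have hPout : ∀ m' ∈ f.support, ∀ μ ∈ (term m').support, ∀ k, k ∉ U → μ k = 0 := by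
      intro m' _ μ hμ k hk
      have hkb : ∀ i, k ∉ block i := by
        intro i hkb
        by_cases him : i ∈ m.support
        · exact hk (Finset.mem_biUnion.mpr ⟨i, him, hkb⟩)
        · rw [hblock0 i him] at hkb; exact absurd hkb (Finset.notMem_empty k)
      have hprod := wt_prod (Finsupp.applyAddHom k) m'.support (fun i => σfull i ^ m' i)
        (fun i => m' i * 0)
        (fun i _ => wt_pow _ (hwσ _ i 0 (fun k' hk' => by
          have hne : k' ≠ k := fun h => (hkb i) (h ▸ hk')
          simp [Finsupp.single_apply, hne])) (m' i))
      have hall := wt_mul (Finsupp.applyAddHom k)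
        (q := MvPolynomial.C (MvPolynomial.coeff m' f))
        (r := ∏ i ∈ m'.support, σfull i ^ m' i) (a := 0)
        (fun ν hν => by rw [suppC _ ν hν]; simp) hprod
      simp only [hterm] at hμ
      have := hall μ hμ
      simpa using this
    -- all monomials of terms have total degree at most d
    have hPdeg : ∀ m' ∈ f.support, ∀ μ ∈ (term m').support, degHom μ ≤ d := by
      intro m' hm' μ hμ
      have hprod := wt_prod degHom m'.support (fun i => σfull i ^ m' i)
        (fun i => m' i * 1)
        (fun i _ => wt_pow _ (hwσ degHom i 1 (fun k' _ => by
          rw [degHom_apply, Finsupp.sum_single_index]; rfl)) (m' i))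
      have hall := wt_mul degHom
        (q := MvPolynomial.C (MvPolynomial.coeff m' f))
        (r := ∏ i ∈ m'.support, σfull i ^ m' i) (a := 0)
        (fun ν hν => by rw [suppC _ ν hν]; simp) hprod
      simp only [hterm] at hμ
      have h2 := hall μ hμ
      rw [h2]
      simp only [mul_one, zero_add]
      have : ∑ i ∈ m'.support, m' i = m'.sum fun _ e => e := rfl
      rw [this]
      exact MvPolynomial.le_totalDegree hm'
    have honesapp : ∀ v, ones v = if v ∈ U then 1 else 0 := by
      intro v; rw [hones]; exact single_sum_apply U v
    have honessupp : ones.support = U := by rw [hones]; exact single_sum_support U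
    -- coefficient of ones in term m
    have hK1a : MvPolynomial.coeff ones (term m) =
        MvPolynomial.coeff m f * ∏ i ∈ m.support, ((m i).factorial : ZMod p) := by
      rw [hterm]
      simp only []
      rw [MvPolynomial.coeff_C_mul]
      congr 1
      have hsplit : ones = ∑ i ∈ m.support, ∑ k ∈ block i, Finsupp.single k 1 := by
        rw [hones, hU]
        exact Finset.sum_biUnion hdisjU
      rw [hsplit]
      rw [coeff_prod_disjoint block m.support
        (fun i _ j _ hij k hk => Finset.disjoint_left.mp (hdisjU i ‹i ∈ m.support› j ‹j ∈ m.support› hij) hk)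
        (fun i => σfull i ^ m i) (fun i => ∑ k ∈ block i, Finsupp.single k 1)
        (fun i _ ν hν k hk => by
          have := wt_pow (Finsupp.applyAddHom k) (hwσ (Finsupp.applyAddHom k) i 0
            (fun k' hk' => by
              have hne : k' ≠ k := fun h => hk (h ▸ hk')
              simp [Finsupp.single_apply, hne])) (m i) ν hν
          simpa using this)
        (fun i _ k hk => by rw [single_sum_apply, if_neg hk])]
      apply Finset.prod_congr rfl
      intro i _
      have := fact_coeff (R := ZMod p) (block i)
      rw [hblockcard i] at this
      rw [hσfull]
      exact this
    -- coefficient of ones in other terms vanishes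
    have hK1b : ∀ m' ∈ f.support, m' ≠ m → MvPolynomial.coeff ones (term m') = 0 := by
      intro m' _ hne
      by_cases hsub : ∀ i ∈ m'.support, i ∈ m.support
      · obtain ⟨i0, hi0⟩ := Finsupp.ne_iff.mp hne
        have hi0m : i0 ∈ m.support := by
          by_contra h
          have hmi0 : m i0 = 0 := Finsupp.notMem_support_iff.mp h
          have : m' i0 = 0 := by
            by_contra h'
            exact h (hsub i0 (Finsupp.mem_support_iff.mpr h'))
          rw [this, hmi0] at hi0
          exact hi0 rfl
        set w0 : (ℕ →₀ ℕ) →+ ℕ := ∑ k ∈ block i0, Finsupp.applyAddHom k with hw0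
        have hw0app : ∀ μ : ℕ →₀ ℕ, w0 μ = ∑ k ∈ block i0, μ k := by
          intro μ
          rw [hw0, AddMonoidHom.finset_sum_apply]
          rfl
        have hval : ∀ i, ∀ k' ∈ block i, w0 (Finsupp.single k' 1) = if i = i0 then 1 else 0 := by
          intro i k' hk'
          rw [hw0app]
          have : ∀ k ∈ block i0, (Finsupp.single k' 1 : ℕ →₀ ℕ) k = if k' = k then 1 else 0 :=
            fun k _ => Finsupp.single_apply
          rw [Finset.sum_congr rfl this, Finset.sum_ite_eq]
          by_cases hii : i = i0
          · subst hii
            rw [if_pos hk', if_pos rfl]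
          · rw [if_neg (fun hmem => hii (hdisjb i i0 k' hk' hmem)), if_neg hii]
        have hprod := wt_prod w0 m'.support (fun i => σfull i ^ m' i)
          (fun i => m' i * (if i = i0 then 1 else 0))
          (fun i _ => wt_pow _ (hwσ w0 i _ (hval i)) (m' i))
        have hall := wt_mul w0
          (q := MvPolynomial.C (MvPolynomial.coeff m' f))
          (r := ∏ i ∈ m'.support, σfull i ^ m' i) (a := 0)
          (fun ν hν => by rw [suppC _ ν hν]; simp) hprod
        have hw0term : ∀ μ ∈ (term m').support, w0 μ = m' i0 := by
          intro μ hμ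
          simp only [hterm] at hμ
          have h2 := hall μ hμ
          rw [h2, zero_add]
          have hsum : ∑ i ∈ m'.support, (fun i => m' i * if i = i0 then 1 else 0) i = m' i0 := by
            simp only [mul_ite, mul_one, mul_zero]
            rw [Finset.sum_ite_eq' m'.support i0 (fun i => m' i)]
            by_cases hii : i0 ∈ m'.support
            · rw [if_pos hii]
            · rw [if_neg hii, Finsupp.notMem_support_iff.mp hii]
          rw [hsum]
        have hw0ones : w0 ones = m i0 := by
          rw [hw0app]
          have : ∀ k ∈ block i0, ones k = 1 := by
            intro k hk
            rw [honesapp, if_pos (Finset.mem_biUnion.mpr ⟨i0, hi0m, hk⟩)]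
          rw [Finset.sum_congr rfl this, Finset.sum_const, smul_eq_mul, mul_one, hblockcard]
        by_contra hcoeff
        have hmem : ones ∈ (term m').support := MvPolynomial.mem_support_iff.mpr hcoeff
        exact hi0 ((hw0term ones hmem).symm.trans hw0ones)
      · push_neg at hsub
        obtain ⟨i0, hi0s, hi0m⟩ := hsub
        have hz : σfull i0 = 0 := by
          rw [hσfull]
          simp only []
          rw [hblock0 i0 hi0m, Finset.sum_empty]
        have : term m' = 0 := by
          rw [hterm]
          simp only []
          rw [Finset.prod_eq_zero hi0s, mul_zero]
          rw [hz]
          exact zero_pow (Finsupp.mem_support_iff.mp hi0s)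
        rw [this, MvPolynomial.coeff_zero]
    -- the key coefficient
    set c : ZMod p := MvPolynomial.coeff m f * ∏ i ∈ m.support, ((m i).factorial : ZMod p)
      with hcdef
    have hK2 : MvPolynomial.coeff ones G = c := by
      rw [hGform, MvPolynomial.coeff_sum]
      rw [Finset.sum_eq_single_of_mem m hm (fun m' hm' hne => hK1b m' hm' hne)]
      rw [hK1a, hcdef]
    have hc : c ≠ 0 := by
      rw [hcdef]
      apply mul_ne_zero
      · exact MvPolynomial.mem_support_iff.mp hm
      · rw [Finset.prod_ne_zero_iff]
        intro i _
        intro hzero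
        rw [ZMod.natCast_eq_zero_iff] at hzero
        have hle := (Nat.Prime.dvd_factorial hp).mp hzero
        have hred' := hred m hm i
        have hp2 := hp.two_le
        omega
    -- monomials of G
    have hPG : ∀ μ ∈ G.support, degHom μ ≤ d ∧ ∀ k, k ∉ U → μ k = 0 := by
      intro μ hμ
      rw [hGform] at hμ
      have := MvPolynomial.support_sum hμ
      rw [Finset.mem_biUnion] at this
      obtain ⟨m', hm', hμ'⟩ := this
      exact ⟨hPdeg m' hm' μ hμ', hPout m' hm' μ hμ'⟩
    -- the alternating-sum construction
    set sgn : Finset ℕ → ZMod p := fun S => (-1 : ZMod p) ^ (d - S.card) with hsgn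
    set gS : Finset ℕ → ℕ → MvPolynomial ℕ (ZMod p) :=
      fun S i => ∑ k ∈ block i ∩ S, MvPolynomial.X k with hgS
    set T : MvPolynomial ℕ (ZMod p) :=
      ∑ S ∈ U.powerset, sgn S • MvPolynomial.aeval (gS S) f with hT
    -- rewrite the substituted polynomials through G
    have hT1 : ∀ S : Finset ℕ, MvPolynomial.aeval (gS S) f =
        MvPolynomial.aeval (fun k => if k ∈ S then MvPolynomial.X k else 0) G := by
      intro S
      rw [hG]
      have hb : MvPolynomial.aeval σfull f = MvPolynomial.bind₁ σfull f := rfl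
      rw [hb, MvPolynomial.aeval_bind₁]
      have hfun : (fun i => MvPolynomial.aeval
          (fun k => if k ∈ S then MvPolynomial.X k else 0) (σfull i)) = gS S := by
        funext i
        simp only [hσfull, hgS]
        rw [map_sum]
        simp only [MvPolynomial.aeval_X]
        rw [Finset.sum_ite_mem]
      rw [hfun]
    have hT2 : ∀ S : Finset ℕ,
        MvPolynomial.aeval (fun k => if k ∈ S then MvPolynomial.X k else 0) G =
        ∑ μ ∈ G.support, if μ.support ⊆ S
          then MvPolynomial.monomial μ (MvPolynomial.coeff μ G) else 0 := by
      intro S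
      conv_lhs => rw [G.as_sum]
      rw [map_sum]
      apply Finset.sum_congr rfl
      intro μ _
      rw [MvPolynomial.aeval_monomial, MvPolynomial.algebraMap_eq]
      by_cases hss : μ.support ⊆ S
      · rw [if_pos hss]
        have : (μ.prod fun k e => (if k ∈ S then MvPolynomial.X k else 0 : MvPolynomial ℕ (ZMod p)) ^ e) =
            μ.prod fun k e => (MvPolynomial.X k : MvPolynomial ℕ (ZMod p)) ^ e := by
          apply Finset.prod_congr rfl
          intro k hk
          simp only [if_pos (hss hk)]
        rw [this, ← MvPolynomial.monomial_eq]
      · rw [if_neg hss]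
        obtain ⟨k0, hk0μ, hk0S⟩ := Finset.not_subset.mp hss
        have : (μ.prod fun k e => (if k ∈ S then MvPolynomial.X k else 0 : MvPolynomial ℕ (ZMod p)) ^ e) = 0 := by
          apply Finset.prod_eq_zero hk0μ
          simp only [if_neg hk0S]
          exact zero_pow (Finsupp.mem_support_iff.mp hk0μ)
        rw [this, mul_zero]
    have hT3 : T = ∑ μ ∈ G.support,
        (∑ S ∈ U.powerset, if μ.support ⊆ S then sgn S else 0) •
          MvPolynomial.monomial μ (MvPolynomial.coeff μ G) := by
      rw [hT]
      rw [Finset.sum_congr rfl (fun S _ => by rw [hT1 S, hT2 S, Finset.smul_sum])]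
      rw [Finset.sum_comm]
      apply Finset.sum_congr rfl
      intro μ _
      rw [Finset.sum_smul]
      apply Finset.sum_congr rfl
      intro S _
      by_cases hss : μ.support ⊆ S
      · rw [if_pos hss, if_pos hss]
      · rw [if_neg hss, if_neg hss, smul_zero, zero_smul]
    have hT4 : ∀ μ ∈ G.support,
        (∑ S ∈ U.powerset, if μ.support ⊆ S then sgn S else 0) =
          if μ.support = U then 1 else 0 := by
      intro μ hμ
      have hAU : μ.support ⊆ U := by
        intro k hk
        by_contra hkU
        exact (Finsupp.mem_support_iff.mp hk) ((hPG μ hμ).2 k hkU)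
      set A := μ.support with hA
      rw [← Finset.sum_filter]
      have hbij : ∑ S ∈ U.powerset.filter (fun S => A ⊆ S), sgn S =
          ∑ S' ∈ (U \ A).powerset, sgn (S' ∪ A) := by
        apply Finset.sum_nbij' (fun S => S \ A) (fun S' => S' ∪ A)
        · intro S hS
          rw [Finset.mem_filter, Finset.mem_powerset] at hS
          rw [Finset.mem_powerset]
          exact Finset.sdiff_subset_sdiff hS.1 (Finset.Subset.refl A)
        · intro S' hS'
          rw [Finset.mem_powerset] at hS'
          rw [Finset.mem_filter, Finset.mem_powerset]
          constructor
          · apply Finset.union_subset (hS'.trans (Finset.sdiff_subset)) hAU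
          · exact Finset.subset_union_right
        · intro S hS
          rw [Finset.mem_filter] at hS
          exact Finset.sdiff_union_of_subset hS.2
        · intro S' hS'
          rw [Finset.mem_powerset] at hS'
          rw [Finset.union_sdiff_right]
          rw [Finset.sdiff_eq_self_iff_disjoint]
          rw [Finset.disjoint_left]
          intro k hk
          exact (Finset.mem_sdiff.mp (hS' hk)).2
        · intro S hS
          rw [Finset.mem_filter] at hS
          rw [Finset.sdiff_union_of_subset hS.2]
      rw [hbij]
      have hcardA : A.card ≤ d := hUcard ▸ Finset.card_le_card hAU
      have hcardD : (U \ A).card = d - A.card := by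
        rw [Finset.card_sdiff_of_subset hAU, hUcard]
      have hterms : ∀ S' ∈ (U \ A).powerset, sgn (S' ∪ A) =
          (-1 : ZMod p) ^ ((U \ A).card) * (-1 : ZMod p) ^ S'.card := by
        intro S' hS'
        rw [Finset.mem_powerset] at hS'
        have hdisj : Disjoint S' A := by
          rw [Finset.disjoint_left]
          intro k hk
          exact (Finset.mem_sdiff.mp (hS' hk)).2
        rw [hsgn]
        simp only []
        rw [Finset.card_union_of_disjoint hdisj]
        have hsc : S'.card ≤ (U \ A).card := Finset.card_le_card hS'
        have he : d - (S'.card + A.card) = (U \ A).card - S'.card := by omega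
        rw [he]
        have h2 : (U \ A).card - S'.card + 2 * S'.card = (U \ A).card + S'.card := by omega
        calc (-1 : ZMod p) ^ ((U \ A).card - S'.card)
            = (-1 : ZMod p) ^ ((U \ A).card - S'.card) * ((-1 : ZMod p) ^ 2) ^ S'.card := by
              rw [neg_one_sq, one_pow, mul_one]
          _ = (-1 : ZMod p) ^ ((U \ A).card - S'.card + 2 * S'.card) := by
              rw [← pow_mul, ← pow_add]
          _ = (-1 : ZMod p) ^ ((U \ A).card + S'.card) := by rw [h2]
          _ = (-1 : ZMod p) ^ ((U \ A).card) * (-1 : ZMod p) ^ S'.card := by rw [pow_add]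
      rw [Finset.sum_congr rfl hterms, ← Finset.mul_sum, S10.sign_sum]
      by_cases hAeq : A = U
      · have hempty : U \ A = ∅ := by rw [hAeq, Finset.sdiff_self]
        rw [if_pos hempty, if_pos hAeq, hempty, Finset.card_empty, pow_zero, mul_one]
      · have hnempty : U \ A ≠ ∅ := by
          intro h
          exact hAeq (Finset.Subset.antisymm hAU (Finset.sdiff_eq_empty_iff_subset.mp h))
        rw [if_neg hnempty, if_neg hAeq, mul_zero]
    have hT5 : T = MvPolynomial.monomial ones c := by
      rw [hT3]
      rw [Finset.sum_congr rfl (fun μ hμ => by rw [hT4 μ hμ])]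
      have hcond : ∀ μ ∈ G.support,
          (if μ.support = U then (1 : ZMod p) else 0) •
              MvPolynomial.monomial μ (MvPolynomial.coeff μ G) =
          if μ = ones then MvPolynomial.monomial μ (MvPolynomial.coeff μ G) else 0 := by
        intro μ hμ
        by_cases heq : μ = ones
        · subst heq
          rw [if_pos honessupp, if_pos rfl, one_smul]
        · have hne : μ.support ≠ U := by
            intro hsupp
            apply heq
            have h1 : ∀ v ∈ U, 1 ≤ μ v := by
              intro v hv
              have : μ v ≠ 0 := Finsupp.mem_support_iff.mp (hsupp ▸ hv)
              omega
            have hsum1 : ∑ v ∈ U, μ v = μ.sum fun _ e => e := by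
              rw [Finsupp.sum]
              rw [hsupp]
            have hle : ∑ v ∈ U, μ v ≤ d := by
              rw [hsum1]
              exact (hPG μ hμ).1
            have hge : ∑ v ∈ U, (1 : ℕ) ≤ ∑ v ∈ U, μ v := Finset.sum_le_sum h1
            have hdU : ∑ v ∈ U, (1 : ℕ) = d := by
              rw [Finset.sum_const, smul_eq_mul, mul_one, hUcard]
            have hequal : ∑ v ∈ U, (1 : ℕ) = ∑ v ∈ U, μ v := by omega
            have hall := (Finset.sum_eq_sum_iff_of_le h1).mp hequal
            ext v
            by_cases hv : v ∈ U
            · rw [honesapp, if_pos hv, ← hall v hv]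
            · rw [honesapp, if_neg hv]
              by_contra h
              exact hv (hsupp ▸ Finsupp.mem_support_iff.mpr h)
          rw [if_neg hne, if_neg heq, zero_smul]
      rw [Finset.sum_congr rfl hcond]
      rw [Finset.sum_ite_eq' G.support ones
        (fun μ => MvPolynomial.monomial μ (MvPolynomial.coeff μ G))]
      have honesmem : ones ∈ G.support := by
        rw [MvPolynomial.mem_support_iff, hK2]
        exact hc
      rw [if_pos honesmem, hK2]
    -- membership in every polynomial linearly closed clonoid containing f
    intro C hC
    simp only [Set.mem_setOf_eq] at hC
    obtain ⟨hPLC, hfC⟩ := hC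
    have hf : f ∈ C := hfC rfl
    have hTC : T ∈ C := by
      rw [hT]
      apply Finset.sum_induction _ (fun q => q ∈ C) (fun a b ha hb => mem_add hPLC ha hb)
        (mem_zero hPLC)
      intro S _
      apply mem_smul hPLC
      apply mem_subst hPLC hf
      intro i
      rw [hgS]
      exact sumX_lin_mem _
    have hmono : (MvPolynomial.monomial ones (1 : ZMod p)) ∈ C := by
      have h1 : c⁻¹ • T ∈ C := mem_smul hPLC hTC c⁻¹
      rw [hT5, MvPolynomial.smul_monomial, smul_eq_mul, inv_mul_cancel₀ hc] at h1
      exact h1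
    set eU := U.orderIsoOfFin hUcard with heU
    set ρ : ℕ → ℕ := fun v => if h : v ∈ U then (eU.symm ⟨v, h⟩ : Fin d) else 0 with hρ
    have hfinal :
        MvPolynomial.aeval (fun v => (MvPolynomial.X (ρ v) : MvPolynomial ℕ (ZMod p)))
          (MvPolynomial.monomial ones (1 : ZMod p)) =
        ∏ i ∈ Finset.range d, MvPolynomial.X i := by
      rw [MvPolynomial.aeval_monomial, MvPolynomial.algebraMap_eq, map_one, one_mul]
      rw [Finsupp.prod, honessupp]
      have hstep : ∀ v ∈ U,
          (MvPolynomial.X (ρ v) : MvPolynomial ℕ (ZMod p)) ^ (ones v) =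
          MvPolynomial.X (ρ v) := by
        intro v hv
        rw [honesapp, if_pos hv, pow_one]
      rw [Finset.prod_congr rfl hstep]
      apply Finset.prod_nbij' ρ (fun n => if h : n < d then ((eU ⟨n, h⟩ : { x // x ∈ U }) : ℕ) else 0)
      · intro v hv
        rw [hρ]
        simp only [dif_pos hv]
        rw [Finset.mem_range]
        exact (eU.symm ⟨v, hv⟩).isLt
      · intro n hn
        rw [Finset.mem_range] at hn
        simp only [dif_pos hn]
        exact (eU ⟨n, hn⟩).2
      · intro v hv
        rw [hρ]
        simp only [dif_pos hv]
        rw [dif_pos (eU.symm ⟨v, hv⟩).isLt]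
        have : (⟨((eU.symm ⟨v, hv⟩ : Fin d) : ℕ), (eU.symm ⟨v, hv⟩).isLt⟩ : Fin d) =
            eU.symm ⟨v, hv⟩ := Fin.eta _ _
        rw [this, OrderIso.apply_symm_apply]
      · intro n hn
        rw [Finset.mem_range] at hn
        simp only [dif_pos hn]
        rw [hρ]
        simp only [dif_pos (eU ⟨n, hn⟩).2]
        have : (⟨((eU ⟨n, hn⟩ : { x // x ∈ U }) : ℕ), (eU ⟨n, hn⟩).2⟩ : { x // x ∈ U }) =
            eU ⟨n, hn⟩ := rfl
        rw [this, OrderIso.symm_apply_apply]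
      · intro v _
        rfl
    have hres := mem_subst hPLC hmono (fun v => MvPolynomial.X (ρ v))
      (fun v => X_lin_mem (ρ v))
    rw [hfinal] at hres
    exact hres
end
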